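/- arXiv:0902.4332 — 5 statements merged into one kernel-verified Lean document; each statement's English description precedes it below -/
import Mathlib

section
/- Let ℓ be a prime, n ≥ 1 an integer, and α an element of Z/ℓ^n with ℓ-adic valuation k (where the valuation of 0 is defined via the zero case). Then the number of pairs (x,y) ∈ (Z/ℓ^n)² with xy = α equals (k+1)(ℓ^n − ℓ^{n−1}) if α ≠ 0, and equals (n+1)(ℓ^n − ℓ^{n−1}) + ℓ^{n−1} if α = 0. -/
open Finset

private lemma count_dvd {d N : ℕ} (hd0 : d ≠ 0) (hd : d ∣ N) :
    ((Finset.range N).filter (fun a => d ∣ a)).card = N / d := by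
  have himg : (Finset.range N).filter (fun a => d ∣ a) =
      (Finset.range (N / d)).image (fun b => d * b) := by
    ext a
    simp only [Finset.mem_filter, Finset.mem_range, Finset.mem_image]
    constructor
    · rintro ⟨haN, b, rfl⟩
      exact ⟨b, (Nat.lt_div_iff_mul_lt' hd b).2 haN, rfl⟩
    · rintro ⟨b, hb, rfl⟩
      exact ⟨(Nat.lt_div_iff_mul_lt' hd b).1 hb, ⟨b, rfl⟩⟩
  rw [himg, Finset.card_image_of_injective _
    (fun x y h => Nat.eq_of_mul_eq_mul_left (Nat.pos_of_ne_zero hd0) h), Finset.card_range]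

private lemma gcd_prime_pow {ℓ n a : ℕ} (hℓ : ℓ.Prime) (ha : a ≠ 0)
    (hv : padicValNat ℓ a < n) : Nat.gcd a (ℓ ^ n) = ℓ ^ padicValNat ℓ a := by
  obtain ⟨j, hj, hgcd⟩ := (Nat.dvd_prime_pow hℓ).1 (Nat.gcd_dvd_right a (ℓ ^ n))
  have hja : ℓ ^ j ∣ a := hgcd ▸ Nat.gcd_dvd_left a (ℓ ^ n)
  have hjv : j ≤ padicValNat ℓ a := by
    have := (Nat.Prime.pow_dvd_iff_le_factorization hℓ ha).1 hja
    rwa [Nat.factorization_def a hℓ] at this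
  have hvj : padicValNat ℓ a ≤ j := by
    have h1 : ℓ ^ padicValNat ℓ a ∣ Nat.gcd a (ℓ ^ n) :=
      Nat.dvd_gcd pow_padicValNat_dvd (pow_dvd_pow ℓ hv.le)
    rw [hgcd] at h1
    exact (Nat.pow_dvd_pow_iff_le_right hℓ.one_lt).1 h1
  rw [hgcd, le_antisymm hjv hvj]

private lemma gcd_eq_sum {ℓ n K a : ℕ} (hℓ : ℓ.Prime) (hKn : K ≤ n) (hva : ¬ ℓ ^ K ∣ a) :
    Nat.gcd a (ℓ ^ n) =
      ∑ i ∈ Finset.range K, if ℓ ^ i ∣ a ∧ ¬ ℓ ^ (i + 1) ∣ a then ℓ ^ i else 0 := by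
  haveI := Fact.mk hℓ
  have ha : a ≠ 0 := by rintro rfl; exact hva (dvd_zero _)
  have hvK : padicValNat ℓ a < K := by
    by_contra h
    exact hva (dvd_trans (pow_dvd_pow ℓ (not_lt.1 h)) pow_padicValNat_dvd)
  rw [gcd_prime_pow hℓ ha (lt_of_lt_of_le hvK hKn)]
  rw [Finset.sum_eq_single_of_mem (padicValNat ℓ a) (Finset.mem_range.2 hvK)]
  · rw [if_pos ⟨pow_padicValNat_dvd, pow_succ_padicValNat_not_dvd ha⟩]
  · intro i _ hiv
    rw [if_neg]
    rintro ⟨h1, h2⟩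
    rcases lt_or_gt_of_ne hiv with h | h
    · exact h2 (dvd_trans (pow_dvd_pow ℓ h) pow_padicValNat_dvd)
    · have := (Nat.Prime.pow_dvd_iff_le_factorization hℓ ha).1 h1
      rw [Nat.factorization_def a hℓ] at this
      omega

private lemma sum_val' : ∀ {m : ℕ} [NeZero m] (f : ℕ → ℕ),
    ∑ x : ZMod m, f x.val = ∑ a ∈ Finset.range m, f a
  | 0, h, _ => absurd rfl h.out
  | (m + 1), _, f => Fin.sum_univ_eq_sum_range (fun i => f i) (m + 1)

private lemma countY {m : ℕ} [NeZero m] (x β : ZMod m) :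
    (Finset.univ.filter (fun y : ZMod m => x * y = β)).card =
      if Nat.gcd x.val m ∣ β.val then Nat.gcd x.val m else 0 := by
  have hm : m ≠ 0 := NeZero.ne m
  have hg0 : 0 < Nat.gcd x.val m := Nat.gcd_pos_of_pos_right x.val (Nat.pos_of_ne_zero hm)
  have hgm : Nat.gcd x.val m ∣ m := Nat.gcd_dvd_right _ _
  have hgx : Nat.gcd x.val m ∣ x.val := Nat.gcd_dvd_left _ _
  have hxval : ((x.val : ℕ) : ZMod m) = x := ZMod.natCast_rightInverse x
  by_cases hdvd : Nat.gcd x.val m ∣ β.val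
  · rw [if_pos hdvd]
    obtain ⟨c, hc⟩ := hdvd
    -- existence of a solution
    have hbez : (Nat.gcd x.val m : ℤ) = x.val * Nat.gcdA x.val m + m * Nat.gcdB x.val m :=
      Nat.gcd_eq_gcd_ab x.val m
    set y₀ : ZMod m := ((Nat.gcdA x.val m * c : ℤ) : ZMod m) with hy₀
    have hxy₀ : x * y₀ = β := by
      have hβc : (β.val : ℤ) = (Nat.gcd x.val m : ℤ) * c := by exact_mod_cast hc
      have key : ((x.val : ℤ)) * (Nat.gcdA x.val m * c) =
          (β.val : ℤ) - (m : ℤ) * (Nat.gcdB x.val m * c) := by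
        rw [hβc, hbez]; ring
      have h1 : x * y₀ = (((x.val : ℤ) * (Nat.gcdA x.val m * c) : ℤ) : ZMod m) := by
        rw [hy₀]; push_cast [hxval]; ring
      rw [h1, key]
      push_cast [ZMod.natCast_self]
      simp [ZMod.natCast_val, ZMod.cast_id]
    -- bijection with the kernel
    have hbij : (Finset.univ.filter (fun y : ZMod m => x * y = β)).card =
        (Finset.univ.filter (fun y : ZMod m => x * y = 0)).card := by
      apply Finset.card_nbij' (i := fun y => y - y₀) (j := fun y => y + y₀)
      · intro y hy
        simp only [Finset.coe_filter, Set.mem_setOf_eq, Finset.mem_filter, Finset.mem_univ, true_and] at hy ⊢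
        rw [mul_sub, hy, hxy₀, sub_self]
      · intro y hy
        simp only [Finset.coe_filter, Set.mem_setOf_eq, Finset.mem_filter, Finset.mem_univ, true_and] at hy ⊢
        rw [mul_add, hy, hxy₀, zero_add]
      · intro y _; simp
      · intro y _; simp
    rw [hbij]
    -- kernel characterization
    have hker : ∀ y : ZMod m, x * y = 0 ↔ (m / Nat.gcd x.val m) ∣ y.val := by
      intro y
      have hyval : ((y.val : ℕ) : ZMod m) = y := ZMod.natCast_rightInverse y
      have h1 : x * y = ((x.val * y.val : ℕ) : ZMod m) := by push_cast [hxval, hyval]; ring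
      rw [h1, ZMod.natCast_eq_zero_iff]
      have hmd : m = Nat.gcd x.val m * (m / Nat.gcd x.val m) := (Nat.mul_div_cancel' hgm).symm
      have hx' : x.val = Nat.gcd x.val m * (x.val / Nat.gcd x.val m) :=
        (Nat.mul_div_cancel' hgx).symm
      have hcop : Nat.Coprime (x.val / Nat.gcd x.val m) (m / Nat.gcd x.val m) :=
        Nat.coprime_div_gcd_div_gcd hg0
      constructor
      · intro h
        have h' : Nat.gcd x.val m * (m / Nat.gcd x.val m) ∣
            Nat.gcd x.val m * ((x.val / Nat.gcd x.val m) * y.val) := by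
          rw [← mul_assoc, ← hx']
          exact (dvd_of_eq hmd.symm).trans h
        exact Nat.Coprime.dvd_of_dvd_mul_left hcop.symm ((mul_dvd_mul_iff_left hg0.ne').1 h')
      · intro h
        exact (dvd_of_eq hmd).trans (mul_dvd_mul hgx h)
    have hfeq : Finset.univ.filter (fun y : ZMod m => x * y = 0) =
        Finset.univ.filter (fun y : ZMod m => (m / Nat.gcd x.val m) ∣ y.val) := by
      ext y; simp [hker y]
    rw [hfeq]
    have hcards : (Finset.univ.filter (fun y : ZMod m => (m / Nat.gcd x.val m) ∣ y.val)).card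
        = ((Finset.range m).filter (fun a => (m / Nat.gcd x.val m) ∣ a)).card := by
      rw [Finset.card_filter, Finset.card_filter]
      exact sum_val' (fun a => if (m / Nat.gcd x.val m) ∣ a then 1 else 0)
    rw [hcards, count_dvd (Nat.div_ne_zero_iff_of_dvd hgm |>.2 ⟨hm, hg0.ne'⟩)
      (Nat.div_dvd_of_dvd hgm), Nat.div_div_self hgm hm]
  · rw [if_neg hdvd]
    rw [Finset.card_eq_zero, Finset.filter_eq_empty_iff]
    intro y _
    intro hxy
    apply hdvd
    have : β.val = (x.val * y.val) % m := by
      rw [← hxy, ZMod.val_mul]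
    rw [this]
    exact Nat.dvd_mod_iff (Nat.gcd_dvd_right _ _) |>.2
      (Dvd.dvd.mul_right (Nat.gcd_dvd_left _ _) _)

private lemma sum_count {ℓ n K : ℕ} (hℓ : ℓ.Prime) (hK : K ≤ n) :
    ∑ a ∈ Finset.range (ℓ ^ n), ∑ i ∈ Finset.range K,
      (if ℓ ^ i ∣ a ∧ ¬ ℓ ^ (i + 1) ∣ a then ℓ ^ i else 0) = K * (ℓ ^ n - ℓ ^ (n - 1)) := by
  have hℓ0 : ℓ ≠ 0 := hℓ.pos.ne'
  rw [Finset.sum_comm]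
  have hterm : ∀ i ∈ Finset.range K,
      (∑ a ∈ Finset.range (ℓ ^ n), if ℓ ^ i ∣ a ∧ ¬ ℓ ^ (i + 1) ∣ a then ℓ ^ i else 0)
        = ℓ ^ n - ℓ ^ (n - 1) := by
    intro i hi
    have hi1 : i + 1 ≤ n := by
      have := Finset.mem_range.1 hi; omega
    rw [← Finset.sum_filter, Finset.sum_const, smul_eq_mul]
    have h1 : ((Finset.range (ℓ ^ n)).filter (fun a => ℓ ^ i ∣ a)).card = ℓ ^ (n - i) := by
      rw [count_dvd (pow_ne_zero i hℓ0) (pow_dvd_pow ℓ (by omega)),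
        Nat.pow_div (by omega) hℓ.pos]
    have h2 : ((Finset.range (ℓ ^ n)).filter (fun a => ℓ ^ (i + 1) ∣ a)).card
        = ℓ ^ (n - (i + 1)) := by
      rw [count_dvd (pow_ne_zero (i + 1) hℓ0) (pow_dvd_pow ℓ hi1),
        Nat.pow_div hi1 hℓ.pos]
    have hsd : (Finset.range (ℓ ^ n)).filter (fun a => ℓ ^ i ∣ a ∧ ¬ ℓ ^ (i + 1) ∣ a)
        = ((Finset.range (ℓ ^ n)).filter (fun a => ℓ ^ i ∣ a)) \
          ((Finset.range (ℓ ^ n)).filter (fun a => ℓ ^ (i + 1) ∣ a)) := by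
      ext a
      simp only [Finset.mem_filter, Finset.mem_sdiff, Finset.mem_range]
      constructor
      · rintro ⟨h, h3, h4⟩; exact ⟨⟨h, h3⟩, fun hh => h4 hh.2⟩
      · rintro ⟨⟨h, h3⟩, h4⟩
        exact ⟨h, h3, fun hh => h4 ⟨h, hh⟩⟩
    rw [hsd, Finset.card_sdiff_of_subset (Finset.monotone_filter_right _
      (fun a _ ha => dvd_trans (pow_dvd_pow ℓ (Nat.le_succ i)) ha)) , h1, h2]
    rw [Nat.sub_mul, ← pow_add, ← pow_add]
    congr 2 <;> omega
  rw [Finset.sum_congr rfl hterm, Finset.sum_const, smul_eq_mul, Finset.card_range]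

/-- Lemma (number of solutions to `x * y = α` in `Z/ℓ^n`). -/
theorem stmt0 (ℓ : ℕ) (hℓ : ℓ.Prime) (n : ℕ) (hn : 1 ≤ n)
    (α : ZMod (ℓ ^ n)) (k : ℕ) (hk : α ≠ 0 → k = padicValNat ℓ α.val) :
    Nat.card {p : ZMod (ℓ ^ n) × ZMod (ℓ ^ n) // p.1 * p.2 = α} =
      if α = 0 then (n + 1) * (ℓ ^ n - ℓ ^ (n - 1)) + ℓ ^ (n - 1)
      else (k + 1) * (ℓ ^ n - ℓ ^ (n - 1)) := by
  haveI : Fact ℓ.Prime := ⟨hℓ⟩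
  have hℓ1 : 1 < ℓ := hℓ.one_lt
  have hm0 : ℓ ^ n ≠ 0 := pow_ne_zero n (by omega)
  haveI : NeZero (ℓ ^ n) := ⟨hm0⟩
  have step1 : Nat.card {p : ZMod (ℓ ^ n) × ZMod (ℓ ^ n) // p.1 * p.2 = α}
      = ∑ a ∈ Finset.range (ℓ ^ n),
          (if Nat.gcd a (ℓ ^ n) ∣ α.val then Nat.gcd a (ℓ ^ n) else 0) := by
    rw [Nat.card_eq_fintype_card, Fintype.card_subtype, Finset.card_filter,
      ← Finset.univ_product_univ, Finset.sum_product]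
    have hx : ∀ x : ZMod (ℓ ^ n),
        (∑ y : ZMod (ℓ ^ n), if x * y = α then 1 else 0)
          = if Nat.gcd x.val (ℓ ^ n) ∣ α.val then Nat.gcd x.val (ℓ ^ n) else 0 := by
      intro x
      rw [← Finset.card_filter]
      exact countY x α
    rw [Finset.sum_congr rfl (fun x _ => hx x)]
    exact sum_val' (fun a => if Nat.gcd a (ℓ ^ n) ∣ α.val then Nat.gcd a (ℓ ^ n) else 0)
  by_cases hα : α = 0
  · rw [if_pos hα, step1]
    have hpt : ∀ a ∈ Finset.range (ℓ ^ n),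
        (if Nat.gcd a (ℓ ^ n) ∣ α.val then Nat.gcd a (ℓ ^ n) else 0)
          = (∑ i ∈ Finset.range n, if ℓ ^ i ∣ a ∧ ¬ ℓ ^ (i + 1) ∣ a then ℓ ^ i else 0)
            + (if a = 0 then ℓ ^ n else 0) := by
      intro a ha
      rw [hα]
      simp only [ZMod.val_zero, dvd_zero, if_true]
      by_cases ha0 : a = 0
      · subst ha0
        simp [Nat.gcd_zero_left, dvd_zero]
      · rw [if_neg ha0, add_zero]
        have hva : ¬ ℓ ^ n ∣ a := by
          intro h
          have := Nat.le_of_dvd (Nat.pos_of_ne_zero ha0) h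
          have := Finset.mem_range.1 ha
          omega
        exact gcd_eq_sum hℓ le_rfl hva
    rw [Finset.sum_congr rfl hpt, Finset.sum_add_distrib, sum_count hℓ le_rfl]
    have hzero : ∑ a ∈ Finset.range (ℓ ^ n), (if a = 0 then ℓ ^ n else 0) = ℓ ^ n := by
      rw [Finset.sum_ite_eq' (Finset.range (ℓ ^ n)) 0 (fun _ => ℓ ^ n),
        if_pos (Finset.mem_range.2 (Nat.pos_of_ne_zero hm0))]
    rw [hzero]
    have hBA : ℓ ^ (n - 1) ≤ ℓ ^ n := Nat.pow_le_pow_right hℓ.pos (by omega)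
    rw [add_mul, one_mul, add_assoc, Nat.sub_add_cancel hBA]
  · rw [if_neg hα, step1]
    have hA0 : α.val ≠ 0 := fun h => hα ((ZMod.val_eq_zero α).1 h)
    have hAm : α.val < ℓ ^ n := ZMod.val_lt α
    rw [hk hα]
    have hkA : ℓ ^ padicValNat ℓ α.val ∣ α.val := pow_padicValNat_dvd
    have hk1A : ¬ ℓ ^ (padicValNat ℓ α.val + 1) ∣ α.val := pow_succ_padicValNat_not_dvd hA0
    have hkn : padicValNat ℓ α.val + 1 ≤ n := by
      have h1 : ℓ ^ padicValNat ℓ α.val ≤ α.val := Nat.le_of_dvd (Nat.pos_of_ne_zero hA0) hkA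
      have h2 : ℓ ^ padicValNat ℓ α.val < ℓ ^ n := lt_of_le_of_lt h1 hAm
      have := (Nat.pow_lt_pow_iff_right hℓ1).1 h2
      omega
    have hpt : ∀ a ∈ Finset.range (ℓ ^ n),
        (if Nat.gcd a (ℓ ^ n) ∣ α.val then Nat.gcd a (ℓ ^ n) else 0)
          = ∑ i ∈ Finset.range (padicValNat ℓ α.val + 1),
              if ℓ ^ i ∣ a ∧ ¬ ℓ ^ (i + 1) ∣ a then ℓ ^ i else 0 := by
      intro a _
      by_cases hka : ℓ ^ (padicValNat ℓ α.val + 1) ∣ a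
      · rw [if_neg, Finset.sum_eq_zero]
        · intro i hi
          rw [if_neg]
          rintro ⟨_, h2⟩
          exact h2 (dvd_trans (pow_dvd_pow ℓ (by
            have := Finset.mem_range.1 hi; omega)) hka)
        · intro hdvd
          exact hk1A ((Nat.dvd_gcd hka (pow_dvd_pow ℓ hkn)).trans hdvd)
      · have ha0 : a ≠ 0 := by rintro rfl; exact hka (dvd_zero _)
        have hvlt : padicValNat ℓ a < padicValNat ℓ α.val + 1 := by
          by_contra h
          exact hka ((pow_dvd_pow ℓ (not_lt.1 h)).trans pow_padicValNat_dvd)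
        have hg : Nat.gcd a (ℓ ^ n) = ℓ ^ padicValNat ℓ a :=
          gcd_prime_pow hℓ ha0 (lt_of_lt_of_le hvlt hkn)
        rw [hg, if_pos ((pow_dvd_pow ℓ (Nat.lt_succ_iff.1 hvlt)).trans hkA), ← hg,
          gcd_eq_sum hℓ hkn hka]
    rw [Finset.sum_congr rfl hpt, sum_count hℓ hkn]
end

section
/- Let ℓ ≥ 3 be a prime, n ≥ 1 an integer, and q a unit in Z/ℓ^n. Fix t ∈ Z/ℓ^n with Δ := t² − 4q a nonzero square in Z/ℓ^n. Then the number of matrices in GL₂(Z/ℓ^n) with determinant q and trace t equals ℓ^{2n} + ℓ^{2n−1}. -/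
open Finset
set_option linter.unusedSectionVars false

instance zmodDecDvd {N : ℕ} [NeZero N] (d x : ZMod N) : Decidable (d ∣ x) :=
  decidable_of_iff (∃ c, x = d * c) ⟨fun ⟨c, h⟩ => ⟨c, h⟩, fun ⟨c, h⟩ => ⟨c, h⟩⟩

section Core
variable {ℓ n : ℕ}

lemma neZero_pow (hℓ : ℓ.Prime) : NeZero (ℓ ^ n) := ⟨pow_ne_zero _ hℓ.pos.ne'⟩

variable [NeZero (ℓ ^ n)]

lemma val_dvd_iff {j : ℕ} (hj : j ≤ n) (x : ZMod (ℓ ^ n)) :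
    (ℓ : ZMod (ℓ ^ n)) ^ j ∣ x ↔ ℓ ^ j ∣ x.val := by
  constructor
  · rintro ⟨c, rfl⟩
    have h1 : ((ℓ : ZMod (ℓ ^ n)) ^ j) = ((ℓ ^ j : ℕ) : ZMod (ℓ ^ n)) := by push_cast; ring
    rw [h1, ZMod.val_mul, ZMod.val_natCast]
    have h2 : ℓ ^ j ∣ ℓ ^ j % ℓ ^ n :=
      (Nat.dvd_mod_iff (pow_dvd_pow _ hj)).mpr dvd_rfl
    exact (Nat.dvd_mod_iff (pow_dvd_pow _ hj)).mpr (Dvd.dvd.mul_right h2 _)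
  · rintro ⟨c, hc⟩
    have : x = ((x.val : ℕ) : ZMod (ℓ ^ n)) := (ZMod.natCast_zmod_val x).symm
    rw [this, hc]
    push_cast
    exact Dvd.intro _ rfl

lemma pow_n_eq_zero : (ℓ : ZMod (ℓ ^ n)) ^ n = 0 := by
  have : ((ℓ ^ n : ℕ) : ZMod (ℓ ^ n)) = 0 := ZMod.natCast_self _
  push_cast at this
  exact this

lemma cnt_dvd (hℓ : ℓ.Prime) {j : ℕ} (hj : j ≤ n) :
    (univ.filter fun x : ZMod (ℓ ^ n) => (ℓ : ZMod (ℓ ^ n)) ^ j ∣ x).card = ℓ ^ (n - j) := by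
  have hℓpos : 0 < ℓ := hℓ.pos
  have hpj : 0 < ℓ ^ j := pow_pos hℓpos _
  rw [← Finset.card_range (ℓ ^ (n - j))]
  apply Finset.card_nbij' (fun x => x.val / ℓ ^ j)
      (fun i => ((ℓ ^ j * i : ℕ) : ZMod (ℓ ^ n)))
  · intro x hx
    simp only [mem_coe, mem_filter, mem_univ, true_and] at hx
    rw [val_dvd_iff hj x] at hx
    simp only [mem_coe, mem_range]
    obtain ⟨c, hc⟩ := hx
    have hv : x.val < ℓ ^ n := ZMod.val_lt x
    rw [hc, Nat.mul_div_cancel_left _ hpj]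
    have : ℓ ^ j * c < ℓ ^ j * ℓ ^ (n - j) := by
      rw [← pow_add, Nat.add_sub_cancel' hj]; omega
    exact lt_of_mul_lt_mul_left this (le_of_lt hpj) |>.trans_le le_rfl
  · intro i hi
    simp only [mem_coe, mem_range] at hi
    simp only [mem_coe, mem_filter, mem_univ, true_and]
    rw [val_dvd_iff hj]
    rw [ZMod.val_natCast]
    exact (Nat.dvd_mod_iff (pow_dvd_pow _ hj)).mpr ⟨i, rfl⟩
  · intro x hx
    simp only [mem_coe, mem_filter, mem_univ, true_and] at hx
    rw [val_dvd_iff hj x] at hx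
    beta_reduce
    obtain ⟨c, hc⟩ := hx
    conv_rhs => rw [← ZMod.natCast_zmod_val x]
    rw [hc, Nat.mul_div_cancel_left _ hpj]
  · intro i hi
    simp only [mem_coe, mem_range] at hi
    have hlt : ℓ ^ j * i < ℓ ^ n := by
      have : ℓ ^ j * i < ℓ ^ j * ℓ ^ (n - j) := by
        exact mul_lt_mul_of_pos_left hi hpj
      rwa [← pow_add, Nat.add_sub_cancel' hj] at this
    beta_reduce
    rw [ZMod.val_natCast, Nat.mod_eq_of_lt hlt, Nat.mul_div_cancel_left _ hpj]


lemma isUnit_iff_not_dvd (hℓ : ℓ.Prime) (hn : 1 ≤ n) (y : ZMod (ℓ ^ n)) :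
    IsUnit y ↔ ¬ (ℓ : ZMod (ℓ ^ n)) ∣ y := by
  have h1 : (ℓ : ZMod (ℓ ^ n)) ∣ y ↔ ℓ ∣ y.val := by
    have := val_dvd_iff (ℓ := ℓ) (n := n) (j := 1) hn y
    simpa using this
  rw [h1]
  conv_lhs => rw [← ZMod.natCast_zmod_val y]
  rw [ZMod.isUnit_iff_coprime]
  rw [Nat.coprime_pow_right_iff hn, Nat.coprime_comm, hℓ.coprime_iff_not_dvd]

lemma udec (hℓ : ℓ.Prime) (hn : 1 ≤ n) (x : ZMod (ℓ ^ n)) (hx : x ≠ 0) :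
    ∃ i < n, ∃ w : ZMod (ℓ ^ n), IsUnit w ∧ x = (ℓ : ZMod (ℓ ^ n)) ^ i * w := by
  have hval : x.val ≠ 0 := by
    intro h
    apply hx
    have := ZMod.natCast_zmod_val x
    rw [h] at this
    simpa using this.symm
  obtain ⟨i, m, hm, hxm⟩ := Nat.exists_eq_pow_mul_and_not_dvd hval ℓ hℓ.ne_one
  have hin : i < n := by
    by_contra hcon
    push_neg at hcon
    have h1 : ℓ ^ n ≤ ℓ ^ i := Nat.pow_le_pow_right hℓ.pos hcon
    have h2 : ℓ ^ i ≤ x.val := by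
      rw [hxm]; exact Nat.le_mul_of_pos_right _ (Nat.pos_of_ne_zero (by rintro rfl; simp at hm))
    have := ZMod.val_lt x
    omega
  refine ⟨i, hin, (m : ZMod (ℓ ^ n)), ?_, ?_⟩
  · rw [ZMod.isUnit_iff_coprime, Nat.coprime_pow_right_iff hn, Nat.coprime_comm,
      hℓ.coprime_iff_not_dvd]
    exact hm
  · conv_lhs => rw [← ZMod.natCast_zmod_val x]
    rw [hxm]; push_cast; ring

lemma pow_ndvd (hℓ : ℓ.Prime) {a b : ℕ} (hbn : b < n) (hba : b < a) :
    ¬ (ℓ : ZMod (ℓ ^ n)) ^ a ∣ (ℓ : ZMod (ℓ ^ n)) ^ b := by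
  intro hdvd
  have han : (ℓ : ZMod (ℓ ^ n)) ^ (min a n) ∣ (ℓ : ZMod (ℓ ^ n)) ^ b :=
    dvd_trans (pow_dvd_pow _ (min_le_left _ _)) hdvd
  rw [val_dvd_iff (min_le_right _ _)] at han
  have hvb : ((ℓ : ZMod (ℓ ^ n)) ^ b).val = ℓ ^ b := by
    have h1 : ((ℓ : ZMod (ℓ ^ n)) ^ b) = ((ℓ ^ b : ℕ) : ZMod (ℓ ^ n)) := by push_cast; ring
    rw [h1, ZMod.val_cast_of_lt (Nat.pow_lt_pow_right hℓ.one_lt hbn)]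
  rw [hvb] at han
  have := (Nat.pow_dvd_pow_iff_le_right hℓ.one_lt).mp han
  omega

lemma cancel_pow (hℓ : ℓ.Prime) {a b : ℕ} (hab : a + b ≤ n) (y : ZMod (ℓ ^ n))
    (h : (ℓ : ZMod (ℓ ^ n)) ^ (a + b) ∣ (ℓ : ZMod (ℓ ^ n)) ^ a * y) :
    (ℓ : ZMod (ℓ ^ n)) ^ b ∣ y := by
  rcases Nat.eq_zero_or_pos b with hb | hb
  · subst hb; simp
  have han : a < n := by omega
  rw [val_dvd_iff hab] at h
  rw [val_dvd_iff (by omega : b ≤ n)]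
  have hva : ((ℓ : ZMod (ℓ ^ n)) ^ a * y).val = ℓ ^ a * y.val % ℓ ^ n := by
    have h1 : ((ℓ : ZMod (ℓ ^ n)) ^ a) = ((ℓ ^ a : ℕ) : ZMod (ℓ ^ n)) := by push_cast; ring
    rw [h1, ZMod.val_mul, ZMod.val_cast_of_lt (Nat.pow_lt_pow_right hℓ.one_lt han)]
  rw [hva] at h
  have h2 : ℓ ^ (a + b) ∣ ℓ ^ a * y.val :=
    (Nat.dvd_mod_iff (pow_dvd_pow _ hab)).mp h
  rw [pow_add] at h2
  exact (mul_dvd_mul_iff_left (pow_ne_zero a hℓ.pos.ne')).mp h2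

lemma unit_add (hℓ : ℓ.Prime) (hn : 1 ≤ n) {w : ZMod (ℓ ^ n)} (hw : IsUnit w) {s : ℕ}
    (hs : 1 ≤ s) (z : ZMod (ℓ ^ n)) : IsUnit (w + (ℓ : ZMod (ℓ ^ n)) ^ s * z) := by
  rw [isUnit_iff_not_dvd hℓ hn] at hw ⊢
  intro hdvd
  apply hw
  have h1 : (ℓ : ZMod (ℓ ^ n)) ∣ (ℓ : ZMod (ℓ ^ n)) ^ s * z :=
    Dvd.dvd.mul_right (dvd_pow_self _ (by omega)) z
  have := dvd_sub hdvd h1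
  simpa using this

lemma kcount (hℓ : ℓ.Prime) {i : ℕ} (hi : i ≤ n) :
    (univ.filter fun c : ZMod (ℓ ^ n) => (ℓ : ZMod (ℓ ^ n)) ^ i * c = 0).card = ℓ ^ i := by
  have key : ∀ c : ZMod (ℓ ^ n), ((ℓ : ZMod (ℓ ^ n)) ^ i * c = 0 ↔
      (ℓ : ZMod (ℓ ^ n)) ^ (n - i) ∣ c) := by
    intro c
    constructor
    · intro h
      apply cancel_pow hℓ (a := i) (b := n - i) (by omega)
      rw [h]
      exact dvd_zero _
    · rintro ⟨d, rfl⟩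
      rw [← mul_assoc, ← pow_add]
      have : i + (n - i) = n := by omega
      rw [this, pow_n_eq_zero, zero_mul]
  rw [Finset.filter_congr (fun c _ => by rw [key c])]
  rw [cnt_dvd hℓ (by omega)]
  congr 1
  omega


lemma fiber_count (hℓ : ℓ.Prime) (hn : 1 ≤ n) {b : ZMod (ℓ ^ n)} (m : ZMod (ℓ ^ n)) {i : ℕ}
    (hin : i < n) (h1 : (ℓ : ZMod (ℓ ^ n)) ^ i ∣ b) (h2 : ¬ (ℓ : ZMod (ℓ ^ n)) ^ (i + 1) ∣ b) :
    (univ.filter fun c => b * c = m).card = if (ℓ : ZMod (ℓ ^ n)) ^ i ∣ m then ℓ ^ i else 0 := by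
  have hb0 : b ≠ 0 := by rintro rfl; exact h2 (dvd_zero _)
  obtain ⟨i2, hi2n, w, hw, rfl⟩ := udec hℓ hn b hb0
  have hii : i2 = i := by
    have hle : i ≤ i2 := by
      by_contra hcon
      push_neg at hcon
      have : (ℓ : ZMod (ℓ ^ n)) ^ i ∣ (ℓ : ZMod (ℓ ^ n)) ^ i2 :=
        hw.dvd_mul_right.mp h1
      exact pow_ndvd hℓ hi2n hcon this
    have hge : i2 < i + 1 := by
      by_contra hcon
      push_neg at hcon
      exact h2 (Dvd.dvd.mul_right (pow_dvd_pow _ hcon) _)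
    omega
  subst i2
  by_cases hm : (ℓ : ZMod (ℓ ^ n)) ^ i ∣ m
  · obtain ⟨z, rfl⟩ := hm
    rw [if_pos (Dvd.intro _ rfl)]
    obtain ⟨wu, rfl⟩ := hw
    rw [← kcount (ℓ := ℓ) (n := n) hℓ (le_of_lt hin)]
    apply Finset.card_nbij' (fun c => (wu : ZMod (ℓ ^ n)) * c - z)
        (fun y => ((wu⁻¹ : (ZMod (ℓ ^ n))ˣ) : ZMod (ℓ ^ n)) * (y + z))
    · intro c hc
      simp only [mem_coe, mem_filter, mem_univ, true_and] at hc ⊢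
      rw [mul_sub]
      rw [show (ℓ : ZMod (ℓ ^ n)) ^ i * ((wu : ZMod (ℓ ^ n)) * c) = (ℓ : ZMod (ℓ ^ n)) ^ i * (wu : ZMod (ℓ ^ n)) * c by ring, hc]
      ring
    · intro y hy
      simp only [mem_coe, mem_filter, mem_univ, true_and] at hy ⊢
      have : (ℓ : ZMod (ℓ ^ n)) ^ i * (wu : ZMod (ℓ ^ n)) * (((wu⁻¹ : (ZMod (ℓ ^ n))ˣ) : ZMod (ℓ ^ n)) * (y + z))
          = (ℓ : ZMod (ℓ ^ n)) ^ i * (((wu : ZMod (ℓ ^ n)) * ((wu⁻¹ : (ZMod (ℓ ^ n))ˣ) : ZMod (ℓ ^ n)))) * (y + z) := by ring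
      rw [this, Units.mul_inv, mul_one, mul_add, hy]
      ring
    · intro c _
      beta_reduce
      have : ((wu⁻¹ : (ZMod (ℓ ^ n))ˣ) : ZMod (ℓ ^ n)) * (((wu : ZMod (ℓ ^ n)) * c - z) + z)
          = (((wu⁻¹ : (ZMod (ℓ ^ n))ˣ) : ZMod (ℓ ^ n)) * (wu : ZMod (ℓ ^ n))) * c := by ring
      rw [this, Units.inv_mul, one_mul]
    · intro y _
      beta_reduce
      have : (wu : ZMod (ℓ ^ n)) * (((wu⁻¹ : (ZMod (ℓ ^ n))ˣ) : ZMod (ℓ ^ n)) * (y + z))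
          = (((wu : ZMod (ℓ ^ n)) * ((wu⁻¹ : (ZMod (ℓ ^ n))ˣ) : ZMod (ℓ ^ n)))) * (y + z) := by ring
      rw [this, Units.mul_inv, one_mul]
      ring
  · rw [if_neg hm, Finset.card_eq_zero, Finset.filter_eq_empty_iff]
    intro c _
    intro hc
    apply hm
    exact ⟨w * c, by rw [← hc]; ring⟩


lemma class_iff (hℓ : ℓ.Prime) {i : ℕ} (hin : i < n) (b : ZMod (ℓ ^ n)) :
    ((ℓ : ZMod (ℓ ^ n)) ^ i ∣ b ∧ ¬ (ℓ : ZMod (ℓ ^ n)) ^ (i + 1) ∣ b) ↔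
      (b.val ≠ 0 ∧ b.val.factorization ℓ = i) := by
  rw [val_dvd_iff (by omega : i ≤ n), val_dvd_iff (by omega : i + 1 ≤ n)]
  constructor
  · rintro ⟨hd, hnd⟩
    have hb0 : b.val ≠ 0 := by rintro h; rw [h] at hnd; exact hnd (dvd_zero _)
    refine ⟨hb0, le_antisymm ?_ ?_⟩
    · by_contra hcon
      push_neg at hcon
      exact hnd ((hℓ.pow_dvd_iff_le_factorization hb0).mpr hcon)
    · exact (hℓ.pow_dvd_iff_le_factorization hb0).mp hd
  · rintro ⟨hb0, hfac⟩
    refine ⟨?_, ?_⟩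
    · rw [← hfac]; exact Nat.ordProj_dvd _ _
    · rw [← hfac]; exact Nat.pow_succ_factorization_not_dvd hb0 hℓ

lemma lemN (hℓ : ℓ.Prime) (hn : 1 ≤ n) (m : ZMod (ℓ ^ n)) :
    (univ.filter fun p : (ZMod (ℓ ^ n)) × (ZMod (ℓ ^ n)) => p.1 * p.2 = m).card
      = (ℓ - 1) * ℓ ^ (n - 1) * ((range n).filter fun j => (ℓ : ZMod (ℓ ^ n)) ^ j ∣ m).card
        + (if m = 0 then ℓ ^ n else 0) := by
  classical
  have h1 : (univ.filter fun p : (ZMod (ℓ ^ n)) × (ZMod (ℓ ^ n)) => p.1 * p.2 = m).card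
      = ∑ b : ZMod (ℓ ^ n), (univ.filter fun c => b * c = m).card := by
    rw [Finset.card_eq_sum_card_fiberwise
      (f := Prod.fst) (t := univ) (fun x _ => mem_univ _)]
    refine Finset.sum_congr rfl fun b _ => ?_
    apply Finset.card_nbij' (fun p => p.2) (fun c => (b, c))
    · rintro ⟨b', c⟩ hp
      simp only [mem_coe, mem_filter, mem_univ, true_and] at hp ⊢
      obtain ⟨h, rfl⟩ := hp
      exact h
    · intro c hc
      simp only [mem_coe, mem_filter, mem_univ, true_and] at hc ⊢
      exact ⟨hc, trivial⟩
    · rintro ⟨b', c⟩ hp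
      simp only [mem_coe, mem_filter, mem_univ, true_and] at hp
      obtain ⟨h, rfl⟩ := hp
      rfl
    · intro c _; rfl
  rw [h1]
  rw [← Finset.add_sum_erase univ _ (mem_univ (0 : ZMod (ℓ ^ n)))]
  have h0 : (univ.filter fun c : ZMod (ℓ ^ n) => (0 : ZMod (ℓ ^ n)) * c = m).card
      = if m = 0 then ℓ ^ n else 0 := by
    by_cases hm : m = 0
    · subst hm
      rw [if_pos rfl]
      have : (univ.filter fun c : ZMod (ℓ ^ n) => (0 : ZMod (ℓ ^ n)) * c = 0) = univ := by
        ext c; simp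
      rw [this, Finset.card_univ, ZMod.card]
    · rw [if_neg hm]
      rw [Finset.card_eq_zero, Finset.filter_eq_empty_iff]
      intro c _
      rw [zero_mul]
      exact fun h => hm h.symm
  rw [h0]
  have h2 : ∑ b ∈ univ.erase (0 : ZMod (ℓ ^ n)), (univ.filter fun c => b * c = m).card
      = (ℓ - 1) * ℓ ^ (n - 1) * ((range n).filter fun j => (ℓ : ZMod (ℓ ^ n)) ^ j ∣ m).card := by
    rw [← Finset.sum_fiberwise_of_maps_to (g := fun b : ZMod (ℓ ^ n) => b.val.factorization ℓ)
      (t := range n) ?_ (fun b => (univ.filter fun c => b * c = m).card)]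
    · have hterm : ∀ i ∈ range n,
          (∑ b ∈ (univ.erase (0 : ZMod (ℓ ^ n))).filter
            (fun b => b.val.factorization ℓ = i), (univ.filter fun c => b * c = m).card)
          = (if (ℓ : ZMod (ℓ ^ n)) ^ i ∣ m then (ℓ - 1) * ℓ ^ (n - 1) else 0) := by
        intro i hi
        rw [mem_range] at hi
        have hfib : (univ.erase (0 : ZMod (ℓ ^ n))).filter
            (fun b => b.val.factorization ℓ = i)
            = univ.filter (fun b => (ℓ : ZMod (ℓ ^ n)) ^ i ∣ b ∧
                ¬ (ℓ : ZMod (ℓ ^ n)) ^ (i + 1) ∣ b) := by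
          ext b
          simp only [mem_filter, mem_erase, mem_univ, true_and, and_true]
          rw [class_iff hℓ hi b]
          constructor
          · rintro ⟨hb, h⟩; exact ⟨by rwa [Ne, ZMod.val_eq_zero], h⟩
          · rintro ⟨hb, h⟩; exact ⟨by rwa [Ne, ZMod.val_eq_zero] at hb, h⟩
        rw [hfib]
        have hconst : ∀ b ∈ univ.filter (fun b => (ℓ : ZMod (ℓ ^ n)) ^ i ∣ b ∧
            ¬ (ℓ : ZMod (ℓ ^ n)) ^ (i + 1) ∣ b),
            (univ.filter fun c => b * c = m).card
              = (if (ℓ : ZMod (ℓ ^ n)) ^ i ∣ m then ℓ ^ i else 0) := by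
          intro b hb
          simp only [mem_filter, mem_univ, true_and] at hb
          exact fiber_count hℓ hn m hi hb.1 hb.2
        rw [Finset.sum_congr rfl hconst, Finset.sum_const]
        have hcard : (univ.filter (fun b => (ℓ : ZMod (ℓ ^ n)) ^ i ∣ b ∧
            ¬ (ℓ : ZMod (ℓ ^ n)) ^ (i + 1) ∣ b)).card = ℓ ^ (n - i) - ℓ ^ (n - (i + 1)) := by
          have hsd : univ.filter (fun b => (ℓ : ZMod (ℓ ^ n)) ^ i ∣ b ∧
              ¬ (ℓ : ZMod (ℓ ^ n)) ^ (i + 1) ∣ b)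
              = (univ.filter fun b : ZMod (ℓ ^ n) => (ℓ : ZMod (ℓ ^ n)) ^ i ∣ b)
                \ (univ.filter fun b : ZMod (ℓ ^ n) => (ℓ : ZMod (ℓ ^ n)) ^ (i + 1) ∣ b) := by
            ext b
            simp only [mem_filter, mem_sdiff, mem_univ, true_and]
            try tauto
          have hsub : (univ.filter fun b : ZMod (ℓ ^ n) => (ℓ : ZMod (ℓ ^ n)) ^ (i + 1) ∣ b)
              ⊆ (univ.filter fun b : ZMod (ℓ ^ n) => (ℓ : ZMod (ℓ ^ n)) ^ i ∣ b) := by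
            intro b hb
            simp only [mem_filter, mem_univ, true_and] at hb ⊢
            exact dvd_trans (pow_dvd_pow _ (by omega)) hb
          rw [hsd, Finset.card_sdiff_of_subset hsub, cnt_dvd hℓ (by omega), cnt_dvd hℓ (by omega)]
        rw [hcard, smul_eq_mul]
        have key : (ℓ ^ (n - i) - ℓ ^ (n - (i + 1))) * ℓ ^ i = (ℓ - 1) * ℓ ^ (n - 1) := by
          rw [Nat.sub_mul, ← pow_add, ← pow_add]
          have e1 : n - i + i = n := by omega
          have e2 : n - (i + 1) + i = n - 1 := by omega
          rw [e1, e2]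
          have e3 : ℓ * ℓ ^ (n - 1) = ℓ ^ n := by
            rw [← pow_succ']
            congr 1
            omega
          rw [Nat.sub_mul, one_mul, e3]
        split_ifs with hdm
        · exact key
        · exact mul_zero _
      rw [Finset.sum_congr rfl hterm, ← Finset.sum_filter, Finset.sum_const, smul_eq_mul,
        mul_comm]
    · intro b hb
      rw [mem_erase] at hb
      rw [mem_range]
      have hb0 : b.val ≠ 0 := by rw [Ne, ZMod.val_eq_zero]; exact hb.1
      have := Nat.ordProj_dvd b.val ℓ
      have hle : ℓ ^ b.val.factorization ℓ ≤ b.val := Nat.le_of_dvd (Nat.pos_of_ne_zero hb0) this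
      have hlt : b.val < ℓ ^ n := ZMod.val_lt b
      by_contra hcon
      push_neg at hcon
      have : ℓ ^ n ≤ ℓ ^ b.val.factorization ℓ := Nat.pow_le_pow_right hℓ.pos hcon
      omega
  rw [h2, add_comm]


lemma countA_small (hℓ : ℓ.Prime) (hn : 1 ≤ n) {δ u : ZMod (ℓ ^ n)} {e : ℕ}
    (hu : IsUnit u) (hδ : δ = (ℓ : ZMod (ℓ ^ n)) ^ e * u) (he : 2 * e < n)
    {j : ℕ} (hj : j ≤ 2 * e) :
    (univ.filter fun x : ZMod (ℓ ^ n) => (ℓ : ZMod (ℓ ^ n)) ^ j ∣ x * (x + δ)).card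
      = ℓ ^ (n - (j + 1) / 2) := by
  set c := (j + 1) / 2 with hc
  have hce : c ≤ e := by omega
  have key : ∀ x : ZMod (ℓ ^ n),
      ((ℓ : ZMod (ℓ ^ n)) ^ j ∣ x * (x + δ) ↔ (ℓ : ZMod (ℓ ^ n)) ^ c ∣ x) := by
    intro x
    constructor
    · intro hdvd
      by_cases hx0 : x = 0
      · rw [hx0]; exact dvd_zero _
      obtain ⟨i, hin, w, hw, rfl⟩ := udec hℓ hn x hx0
      by_cases hic : c ≤ i
      · exact Dvd.dvd.mul_right (pow_dvd_pow _ hic) _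
      push_neg at hic
      exfalso
      have hsplit : (ℓ : ZMod (ℓ ^ n)) ^ i * w + δ
          = (ℓ : ZMod (ℓ ^ n)) ^ i * (w + (ℓ : ZMod (ℓ ^ n)) ^ (e - i) * u) := by
        rw [hδ]
        rw [mul_add, ← mul_assoc, ← pow_add]
        congr 3
        omega
      rw [hsplit] at hdvd
      have hz : IsUnit (w * (w + (ℓ : ZMod (ℓ ^ n)) ^ (e - i) * u)) :=
        hw.mul (unit_add hℓ hn hw (by omega) u)
      have h2i : (ℓ : ZMod (ℓ ^ n)) ^ j ∣ (ℓ : ZMod (ℓ ^ n)) ^ (2 * i) := by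
        have : (ℓ : ZMod (ℓ ^ n)) ^ i * w * ((ℓ : ZMod (ℓ ^ n)) ^ i *
            (w + (ℓ : ZMod (ℓ ^ n)) ^ (e - i) * u))
            = (ℓ : ZMod (ℓ ^ n)) ^ (2 * i) * (w * (w + (ℓ : ZMod (ℓ ^ n)) ^ (e - i) * u)) := by
          rw [two_mul, pow_add]; ring
        rw [this] at hdvd
        exact hz.dvd_mul_right.mp hdvd
      exact pow_ndvd hℓ (by omega) (by omega) h2i
    · rintro ⟨y, rfl⟩
      have hdc : (ℓ : ZMod (ℓ ^ n)) ^ c ∣ (ℓ : ZMod (ℓ ^ n)) ^ c * y + δ := by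
        refine dvd_add (Dvd.intro _ rfl) ?_
        rw [hδ]
        exact Dvd.dvd.mul_right (pow_dvd_pow _ hce) _
      obtain ⟨z, hz⟩ := hdc
      rw [hz]
      have : (ℓ : ZMod (ℓ ^ n)) ^ c * y * ((ℓ : ZMod (ℓ ^ n)) ^ c * z)
          = (ℓ : ZMod (ℓ ^ n)) ^ (2 * c) * (y * z) := by
        rw [two_mul, pow_add]; ring
      rw [this]
      exact Dvd.dvd.mul_right (pow_dvd_pow _ (by omega)) _
  rw [Finset.filter_congr (fun x _ => by rw [key x])]
  exact cnt_dvd hℓ (by omega)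

lemma countA_large (hℓ : ℓ.Prime) (hn : 1 ≤ n) {δ u : ZMod (ℓ ^ n)} {e : ℕ}
    (hu : IsUnit u) (hδ : δ = (ℓ : ZMod (ℓ ^ n)) ^ e * u) (he : 2 * e < n)
    {j : ℕ} (hj1 : 2 * e < j) (hj2 : j ≤ n) :
    (univ.filter fun x : ZMod (ℓ ^ n) => (ℓ : ZMod (ℓ ^ n)) ^ j ∣ x * (x + δ)).card
      = 2 * ℓ ^ (n - (j - e)) := by
  have key : ∀ x : ZMod (ℓ ^ n),
      ((ℓ : ZMod (ℓ ^ n)) ^ j ∣ x * (x + δ) ↔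
        ((ℓ : ZMod (ℓ ^ n)) ^ (j - e) ∣ x ∨ (ℓ : ZMod (ℓ ^ n)) ^ (j - e) ∣ x + δ)) := by
    intro x
    constructor
    · intro hdvd
      by_cases hx0 : x = 0
      · left; rw [hx0]; exact dvd_zero _
      obtain ⟨i, hin, w, hw, rfl⟩ := udec hℓ hn x hx0
      by_cases hie : i < e
      · exfalso
        have hsplit : (ℓ : ZMod (ℓ ^ n)) ^ i * w + δ
            = (ℓ : ZMod (ℓ ^ n)) ^ i * (w + (ℓ : ZMod (ℓ ^ n)) ^ (e - i) * u) := by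
          rw [hδ, mul_add, ← mul_assoc, ← pow_add]
          congr 3
          omega
        rw [hsplit] at hdvd
        have hz : IsUnit (w * (w + (ℓ : ZMod (ℓ ^ n)) ^ (e - i) * u)) :=
          hw.mul (unit_add hℓ hn hw (by omega) u)
        have h2i : (ℓ : ZMod (ℓ ^ n)) ^ j ∣ (ℓ : ZMod (ℓ ^ n)) ^ (2 * i) := by
          have : (ℓ : ZMod (ℓ ^ n)) ^ i * w * ((ℓ : ZMod (ℓ ^ n)) ^ i *
              (w + (ℓ : ZMod (ℓ ^ n)) ^ (e - i) * u))
              = (ℓ : ZMod (ℓ ^ n)) ^ (2 * i) * (w * (w + (ℓ : ZMod (ℓ ^ n)) ^ (e - i) * u)) := by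
            rw [two_mul, pow_add]; ring
          rw [this] at hdvd
          exact hz.dvd_mul_right.mp hdvd
        exact pow_ndvd hℓ (by omega) (by omega) h2i
      push_neg at hie
      by_cases hije : j - e ≤ i
      · left; exact Dvd.dvd.mul_right (pow_dvd_pow _ hije) _
      push_neg at hije
      by_cases hieq : e < i
      · exfalso
        have hsplit : (ℓ : ZMod (ℓ ^ n)) ^ i * w + δ
            = (ℓ : ZMod (ℓ ^ n)) ^ e * (u + (ℓ : ZMod (ℓ ^ n)) ^ (i - e) * w) := by
          rw [hδ, mul_add, ← mul_assoc, ← pow_add]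
          have : e + (i - e) = i := by omega
          rw [this]
          ring
        rw [hsplit] at hdvd
        have hz : IsUnit (w * (u + (ℓ : ZMod (ℓ ^ n)) ^ (i - e) * w)) :=
          hw.mul (unit_add hℓ hn hu (by omega) w)
        have h2i : (ℓ : ZMod (ℓ ^ n)) ^ j ∣ (ℓ : ZMod (ℓ ^ n)) ^ (i + e) := by
          have : (ℓ : ZMod (ℓ ^ n)) ^ i * w * ((ℓ : ZMod (ℓ ^ n)) ^ e *
              (u + (ℓ : ZMod (ℓ ^ n)) ^ (i - e) * w))
              = (ℓ : ZMod (ℓ ^ n)) ^ (i + e) * (w * (u + (ℓ : ZMod (ℓ ^ n)) ^ (i - e) * w)) := by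
            rw [pow_add]; ring
          rw [this] at hdvd
          exact hz.dvd_mul_right.mp hdvd
        exact pow_ndvd hℓ (by omega) (by omega) h2i
      have hieq2 : i = e := by omega
      subst hieq2
      right
      have hsplit : (ℓ : ZMod (ℓ ^ n)) ^ i * w + δ = (ℓ : ZMod (ℓ ^ n)) ^ i * (w + u) := by
        rw [hδ, mul_add]
      rw [hsplit] at hdvd ⊢
      have hprod : (ℓ : ZMod (ℓ ^ n)) ^ i * w * ((ℓ : ZMod (ℓ ^ n)) ^ i * (w + u))
          = (ℓ : ZMod (ℓ ^ n)) ^ (2 * i) * (w * (w + u)) := by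
        rw [two_mul, pow_add]; ring
      rw [hprod] at hdvd
      have hcan : (ℓ : ZMod (ℓ ^ n)) ^ (j - 2 * i) ∣ w * (w + u) := by
        apply cancel_pow hℓ (a := 2 * i) (b := j - 2 * i) (by omega)
        have : 2 * i + (j - 2 * i) = j := by omega
        rw [this]
        exact hdvd
      have hcan2 : (ℓ : ZMod (ℓ ^ n)) ^ (j - 2 * i) ∣ w + u := hw.dvd_mul_left.mp hcan
      obtain ⟨z, hz⟩ := hcan2
      rw [hz, ← mul_assoc, ← pow_add]
      refine Dvd.dvd.mul_right (pow_dvd_pow _ (by omega)) _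
    · rintro (⟨y, hy⟩ | ⟨y, hy⟩)
      · have hd1 : (ℓ : ZMod (ℓ ^ n)) ^ e ∣ x + δ := by
          refine dvd_add ?_ ?_
          · rw [hy]; exact Dvd.dvd.mul_right (pow_dvd_pow _ (by omega)) _
          · rw [hδ]; exact Dvd.intro _ rfl
        obtain ⟨z, hz⟩ := hd1
        rw [hz, hy]
        have : (ℓ : ZMod (ℓ ^ n)) ^ (j - e) * y * ((ℓ : ZMod (ℓ ^ n)) ^ e * z)
            = (ℓ : ZMod (ℓ ^ n)) ^ (j - e + e) * (y * z) := by
          rw [pow_add]; ring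
        rw [this]
        have hje : j - e + e = j := by omega
        rw [hje]
        exact Dvd.intro _ rfl
      · have hd1 : (ℓ : ZMod (ℓ ^ n)) ^ e ∣ x := by
          have : x = (x + δ) - δ := by ring
          rw [this]
          refine dvd_sub ?_ ?_
          · rw [hy]; exact Dvd.dvd.mul_right (pow_dvd_pow _ (by omega)) _
          · rw [hδ]; exact Dvd.intro _ rfl
        obtain ⟨z, hz⟩ := hd1
        rw [hy, hz]
        have : (ℓ : ZMod (ℓ ^ n)) ^ e * z * ((ℓ : ZMod (ℓ ^ n)) ^ (j - e) * y)
            = (ℓ : ZMod (ℓ ^ n)) ^ (e + (j - e)) * (z * y) := by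
          rw [pow_add]; ring
        rw [this]
        have hje : e + (j - e) = j := by omega
        rw [hje]
        exact Dvd.intro _ rfl
  rw [Finset.filter_congr (fun x _ => by rw [key x])]
  rw [Finset.filter_or]
  rw [Finset.card_union_of_disjoint]
  · rw [cnt_dvd hℓ (by omega)]
    have : (univ.filter fun x : ZMod (ℓ ^ n) => (ℓ : ZMod (ℓ ^ n)) ^ (j - e) ∣ x + δ).card
        = ℓ ^ (n - (j - e)) := by
      rw [← cnt_dvd (n := n) hℓ (by omega : j - e ≤ n)]
      apply Finset.card_nbij' (fun x => x + δ) (fun y => y - δ)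
      · intro x hx
        simp only [mem_coe, mem_filter, mem_univ, true_and] at hx ⊢
        exact hx
      · intro y hy
        simp only [mem_coe, mem_filter, mem_univ, true_and] at hy ⊢
        have : y - δ + δ = y := by ring
        rw [this]
        exact hy
      · intro x _; ring
      · intro y _; ring
    rw [this]
    omega
  · rw [Finset.disjoint_left]
    intro x hx1 hx2
    simp only [mem_filter, mem_univ, true_and] at hx1 hx2
    have hdδ : (ℓ : ZMod (ℓ ^ n)) ^ (j - e) ∣ δ := by
      have : δ = (x + δ) - x := by ring
      rw [this]
      exact dvd_sub hx2 hx1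
    rw [hδ] at hdδ
    have : (ℓ : ZMod (ℓ ^ n)) ^ (j - e) ∣ (ℓ : ZMod (ℓ ^ n)) ^ e := hu.dvd_mul_right.mp hdδ
    exact pow_ndvd hℓ (by omega) (by omega) this


lemma sumP1 (ℓ' n' e' : ℕ) (h : 2 * e' < n') :
    ∑ j ∈ range (2 * e' + 1), ℓ' ^ (n' - (j + 1) / 2)
      = ℓ' ^ n' + 2 * ∑ k ∈ Ico (n' - e') n', ℓ' ^ k := by
  induction e' with
  | zero => simp
  | succ e ih =>
    have h' : 2 * e < n' := by omega
    have e1 : 2 * (e + 1) + 1 = (2 * e + 1) + 1 + 1 := by omega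
    rw [e1, Finset.sum_range_succ, Finset.sum_range_succ, ih h']
    have e2 : n' - ((2 * e + 1) + 1) / 2 = n' - (e + 1) := by omega
    have e3 : n' - ((2 * e + 1 + 1) + 1) / 2 = n' - (e + 1) := by omega
    rw [e2, e3]
    have e4 : ∑ k ∈ Ico (n' - (e + 1)) n', ℓ' ^ k
        = ℓ' ^ (n' - (e + 1)) + ∑ k ∈ Ico (n' - e) n', ℓ' ^ k := by
      rw [Finset.sum_eq_sum_Ico_succ_bot (by omega : n' - (e + 1) < n')]
      have e5 : n' - (e + 1) + 1 = n' - e := by omega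
      rw [e5]
    rw [e4]
    ring

lemma sumP2 (ℓ' n' e' : ℕ) (h : 2 * e' < n') :
    ∑ j ∈ Ico (2 * e' + 1) n', ℓ' ^ (n' - (j - e'))
      = ∑ k ∈ Ico (e' + 1) (n' - e'), ℓ' ^ k := by
  apply Finset.sum_nbij' (fun j => n' + e' - j) (fun k => n' + e' - k)
  · intro j hj
    rw [Finset.mem_Ico] at hj ⊢
    omega
  · intro k hk
    rw [Finset.mem_Ico] at hk ⊢
    omega
  · intro j hj
    rw [Finset.mem_Ico] at hj
    omega
  · intro k hk
    rw [Finset.mem_Ico] at hk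
    omega
  · intro j hj
    rw [Finset.mem_Ico] at hj
    congr 1
    omega

lemma geo (ℓ' a b : ℕ) (hl : 1 ≤ ℓ') (h : a ≤ b) :
    (ℓ' - 1) * ∑ k ∈ Ico a b, ℓ' ^ k + ℓ' ^ a = ℓ' ^ b := by
  induction b with
  | zero =>
    have : a = 0 := by omega
    subst this
    simp
  | succ b ih =>
    rcases Nat.lt_or_ge a (b + 1) with hab | hab
    · have hab' : a ≤ b := by omega
      rw [Finset.sum_Ico_succ_top hab']
      have hb : (ℓ' - 1) * ℓ' ^ b + ℓ' ^ b = ℓ' ^ (b + 1) := by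
        rw [Nat.sub_mul, one_mul, pow_succ]
        have h1 : ℓ' ^ b ≤ ℓ' * ℓ' ^ b := Nat.le_mul_of_pos_left _ hl
        rw [mul_comm (ℓ' ^ b) ℓ']
        omega
      have := ih hab'
      rw [mul_add]
      omega
    · have : a = b + 1 := by omega
      subst this
      simp

lemma final_arith (ℓ' n' e' S : ℕ) (h2e : 2 * e' < n') (hn' : 1 ≤ n') (hl : 1 ≤ ℓ')
    (hS : (ℓ' - 1) * S + ℓ' ^ (e' + 1) = ℓ' ^ n') :
    (ℓ' - 1) * ℓ' ^ (n' - 1) * (ℓ' ^ n' + 2 * S) + ℓ' ^ n' * (2 * ℓ' ^ e')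
      = ℓ' ^ (2 * n') + ℓ' ^ (2 * n' - 1) := by
  obtain ⟨L, rfl⟩ : ∃ L, ℓ' = L + 1 := ⟨ℓ' - 1, by omega⟩
  simp only [Nat.add_sub_cancel] at hS ⊢
  have p1 : (L + 1) ^ (n' - 1) * (L + 1) ^ n' = (L + 1) ^ (2 * n' - 1) := by
    rw [← pow_add]; congr 1; omega
  have p2 : (L + 1) * (L + 1) ^ (2 * n' - 1) = (L + 1) ^ (2 * n') := by
    rw [← pow_succ']; congr 1; omega
  have p3 : (L + 1) ^ (n' - 1) * (L + 1) ^ (e' + 1) = (L + 1) ^ e' * (L + 1) ^ n' := by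
    rw [← pow_add, ← pow_add]; congr 1; omega
  have q1 : (L + 1) ^ (n' - 1) * (L * S) + (L + 1) ^ (n' - 1) * (L + 1) ^ (e' + 1)
      = (L + 1) ^ (n' - 1) * (L + 1) ^ n' := by
    rw [← mul_add, hS]
  nlinarith [p1, p2, p3, q1]

lemma Tcount (hℓ : ℓ.Prime) (hn : 1 ≤ n) {δ : ZMod (ℓ ^ n)} (hδ2 : δ * δ ≠ 0) :
    (univ.filter fun p : (ZMod (ℓ ^ n)) × (ZMod (ℓ ^ n)) × (ZMod (ℓ ^ n)) =>
        p.2.1 * p.2.2 = p.1 * (p.1 + δ)).card = ℓ ^ (2 * n) + ℓ ^ (2 * n - 1) := by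
  classical
  have hδ0 : δ ≠ 0 := by rintro rfl; exact hδ2 (by ring)
  obtain ⟨e, hen, u, hu, hδ⟩ := udec hℓ hn δ hδ0
  have h2e : 2 * e < n := by
    by_contra hcon
    push_neg at hcon
    apply hδ2
    rw [hδ]
    have step : (ℓ : ZMod (ℓ ^ n)) ^ e * u * ((ℓ : ZMod (ℓ ^ n)) ^ e * u)
        = (ℓ : ZMod (ℓ ^ n)) ^ n * ((ℓ : ZMod (ℓ ^ n)) ^ (2 * e - n) * (u * u)) := by
      have e1 : (ℓ : ZMod (ℓ ^ n)) ^ e * u * ((ℓ : ZMod (ℓ ^ n)) ^ e * u)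
          = (ℓ : ZMod (ℓ ^ n)) ^ (e + e) * (u * u) := by rw [pow_add]; ring
      have e2 : (ℓ : ZMod (ℓ ^ n)) ^ (e + e) = (ℓ : ZMod (ℓ ^ n)) ^ (n + (2 * e - n)) := by
        congr 1
        omega
      rw [e1, e2, pow_add]
      ring
    rw [step, pow_n_eq_zero, zero_mul]
  -- fiberwise over x = p.1
  have h1 : (univ.filter fun p : (ZMod (ℓ ^ n)) × (ZMod (ℓ ^ n)) × (ZMod (ℓ ^ n)) =>
        p.2.1 * p.2.2 = p.1 * (p.1 + δ)).card
      = ∑ x : ZMod (ℓ ^ n),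
          (univ.filter fun bc : (ZMod (ℓ ^ n)) × (ZMod (ℓ ^ n)) =>
            bc.1 * bc.2 = x * (x + δ)).card := by
    rw [Finset.card_eq_sum_card_fiberwise
      (f := Prod.fst) (t := univ) (fun x _ => mem_univ _)]
    refine Finset.sum_congr rfl fun x _ => ?_
    apply Finset.card_nbij' (fun p => p.2) (fun bc => (x, bc))
    · rintro ⟨x', bc⟩ hp
      simp only [mem_coe, mem_filter, mem_univ, true_and] at hp ⊢
      obtain ⟨h, rfl⟩ := hp
      exact h
    · intro bc hbc
      simp only [mem_coe, mem_filter, mem_univ, true_and] at hbc ⊢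
      exact ⟨hbc, trivial⟩
    · rintro ⟨x', bc⟩ hp
      simp only [mem_coe, mem_filter, mem_univ, true_and] at hp
      obtain ⟨h, rfl⟩ := hp
      rfl
    · intro bc _; rfl
  rw [h1]
  have h2 : ∀ x : ZMod (ℓ ^ n),
      (univ.filter fun bc : (ZMod (ℓ ^ n)) × (ZMod (ℓ ^ n)) =>
        bc.1 * bc.2 = x * (x + δ)).card
      = (ℓ - 1) * ℓ ^ (n - 1) *
          ((range n).filter fun j => (ℓ : ZMod (ℓ ^ n)) ^ j ∣ x * (x + δ)).card
        + (if x * (x + δ) = 0 then ℓ ^ n else 0) :=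
    fun x => lemN hℓ hn _
  rw [Finset.sum_congr rfl fun x _ => h2 x]
  rw [Finset.sum_add_distrib]
  -- second summand: count of zeros
  have hZ : (∑ x : ZMod (ℓ ^ n), if x * (x + δ) = 0 then ℓ ^ n else 0)
      = ℓ ^ n * (2 * ℓ ^ e) := by
    rw [← Finset.sum_filter, Finset.sum_const, smul_eq_mul]
    have hA : (univ.filter fun x : ZMod (ℓ ^ n) => x * (x + δ) = 0).card = 2 * ℓ ^ (n - (n - e)) := by
      have hth := countA_large hℓ hn hu hδ h2e (j := n) h2e le_rfl
      rw [← hth]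
      congr 1
      apply Finset.filter_congr
      intro x _
      rw [pow_n_eq_zero, zero_dvd_iff]
    rw [hA]
    have : n - (n - e) = e := by omega
    rw [this, mul_comm]
  rw [hZ]
  -- first summand
  have hD : (∑ x : ZMod (ℓ ^ n), (ℓ - 1) * ℓ ^ (n - 1) *
      ((range n).filter fun j => (ℓ : ZMod (ℓ ^ n)) ^ j ∣ x * (x + δ)).card)
      = (ℓ - 1) * ℓ ^ (n - 1) *
        (∑ j ∈ range n,
          (univ.filter fun x : ZMod (ℓ ^ n) => (ℓ : ZMod (ℓ ^ n)) ^ j ∣ x * (x + δ)).card) := by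
    rw [← Finset.mul_sum]
    congr 1
    have swap : ∀ x : ZMod (ℓ ^ n),
        ((range n).filter fun j => (ℓ : ZMod (ℓ ^ n)) ^ j ∣ x * (x + δ)).card
        = ∑ j ∈ range n, if (ℓ : ZMod (ℓ ^ n)) ^ j ∣ x * (x + δ) then 1 else 0 := by
      intro x
      rw [Finset.card_filter]
    rw [Finset.sum_congr rfl fun x _ => swap x, Finset.sum_comm]
    refine Finset.sum_congr rfl fun j _ => ?_
    rw [← Finset.card_filter]
  rw [hD]
  -- evaluate the inner sum of A_j
  have hW : (∑ j ∈ range n,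
      (univ.filter fun x : ZMod (ℓ ^ n) => (ℓ : ZMod (ℓ ^ n)) ^ j ∣ x * (x + δ)).card)
      = ℓ ^ n + 2 * ∑ k ∈ Ico (e + 1) n, ℓ ^ k := by
    have hsplit : range n = Ico 0 n := by rw [Finset.range_eq_Ico]
    rw [hsplit, ← Finset.sum_Ico_consecutive _ (by omega : 0 ≤ 2 * e + 1) (by omega : 2 * e + 1 ≤ n)]
    have hpart1 : ∑ j ∈ Ico 0 (2 * e + 1),
        (univ.filter fun x : ZMod (ℓ ^ n) => (ℓ : ZMod (ℓ ^ n)) ^ j ∣ x * (x + δ)).card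
        = ∑ j ∈ range (2 * e + 1), ℓ ^ (n - (j + 1) / 2) := by
      rw [← Finset.range_eq_Ico]
      refine Finset.sum_congr rfl fun j hj => ?_
      rw [mem_range] at hj
      exact countA_small hℓ hn hu hδ h2e (by omega)
    have hpart2 : ∑ j ∈ Ico (2 * e + 1) n,
        (univ.filter fun x : ZMod (ℓ ^ n) => (ℓ : ZMod (ℓ ^ n)) ^ j ∣ x * (x + δ)).card
        = 2 * ∑ j ∈ Ico (2 * e + 1) n, ℓ ^ (n - (j - e)) := by
      rw [Finset.mul_sum]
      refine Finset.sum_congr rfl fun j hj => ?_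
      rw [Finset.mem_Ico] at hj
      exact countA_large hℓ hn hu hδ h2e (by omega) (by omega)
    rw [hpart1, hpart2, sumP1 ℓ n e h2e, sumP2 ℓ n e h2e]
    have hjoin : ∑ k ∈ Ico (e + 1) (n - e), (ℓ : ℕ) ^ k + ∑ k ∈ Ico (n - e) n, (ℓ : ℕ) ^ k
        = ∑ k ∈ Ico (e + 1) n, (ℓ : ℕ) ^ k :=
      Finset.sum_Ico_consecutive _ (by omega) (by omega)
    omega
  rw [hW]
  exact final_arith ℓ n e _ h2e hn hℓ.pos
    (geo ℓ (e + 1) n hℓ.pos (by omega))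

end Core

/-- Number of matrices in `GL₂(Z/ℓ^n)` with determinant `q` and trace `t`, when
`Δ = t² - 4q` is a nonzero square. -/
theorem stmt3 (ℓ : ℕ) (hℓ : ℓ.Prime) (h3 : 3 ≤ ℓ) (n : ℕ) (hn : 1 ≤ n)
    (q t : ZMod (ℓ ^ n)) (hq : IsUnit q)
    (hsq : IsSquare (t ^ 2 - 4 * q)) (hne : t ^ 2 - 4 * q ≠ 0) :
    Nat.card {M : Matrix (Fin 2) (Fin 2) (ZMod (ℓ ^ n)) //
        M.det = q ∧ M.trace = t} = ℓ ^ (2 * n) + ℓ ^ (2 * n - 1) := by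
  haveI : NeZero (ℓ ^ n) := neZero_pow hℓ
  obtain ⟨δ0, hδ0⟩ := hsq
  have hδ2 : δ0 * δ0 ≠ 0 := by rw [← hδ0]; exact hne
  have h2 : IsUnit (2 : ZMod (ℓ ^ n)) := by
    have hcop : Nat.Coprime 2 (ℓ ^ n) := by
      apply Nat.Coprime.pow_right
      rw [Nat.coprime_comm]
      rw [hℓ.coprime_iff_not_dvd]
      intro hdvd
      have := Nat.le_of_dvd (by norm_num) hdvd
      omega
    have h2' := (ZMod.isUnit_iff_coprime 2 (ℓ ^ n)).mpr hcop
    simpa using h2'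
  set y : ZMod (ℓ ^ n) := ((h2.unit⁻¹ : (ZMod (ℓ ^ n))ˣ) : ZMod (ℓ ^ n)) with hy
  have h2y : 2 * y = 1 := by
    have := h2.unit.mul_inv
    rwa [h2.unit_spec] at this
  set α : ZMod (ℓ ^ n) := (t + δ0) * y with hα
  set β : ZMod (ℓ ^ n) := (t - δ0) * y with hβ
  have hab : α + β = t := by rw [hα, hβ]; linear_combination t * h2y
  have hq2 : α * β = q := by rw [hα, hβ]; linear_combination (y * y) * hδ0 + q * (2 * y + 1) * h2y
  have hda : α - β = δ0 := by rw [hα, hβ]; linear_combination δ0 * h2y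
  have E : {M : Matrix (Fin 2) (Fin 2) (ZMod (ℓ ^ n)) // M.det = q ∧ M.trace = t} ≃
      {p : (ZMod (ℓ ^ n)) × (ZMod (ℓ ^ n)) × (ZMod (ℓ ^ n)) //
        p.2.1 * p.2.2 = p.1 * (p.1 + δ0)} := by
    refine
      { toFun := fun M => ⟨(M.1 0 0 - α, M.1 0 1, -(M.1 1 0)), ?_⟩
        invFun := fun p => ⟨!![p.1.1 + α, p.1.2.1; -(p.1.2.2), β - p.1.1], ?_, ?_⟩
        left_inv := ?_
        right_inv := ?_ }
    · have hdet := M.2.1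
      have htr := M.2.2
      rw [Matrix.det_fin_two] at hdet
      rw [Matrix.trace_fin_two] at htr
      dsimp only
      linear_combination hdet - hq2 + M.1 0 0 * hab - M.1 0 0 * htr + (M.1 0 0 - α) * hda
    · have hp := p.2
      rw [Matrix.det_fin_two_of]
      linear_combination hp + hq2 - p.1.1 * hda
    · rw [Matrix.trace_fin_two_of]
      linear_combination hab
    · intro M
      apply Subtype.ext
      have htr := M.2.2
      rw [Matrix.trace_fin_two] at htr
      ext i j
      fin_cases i <;> fin_cases j <;> simp <;> try ring
      · linear_combination hab - htr
    · intro p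
      apply Subtype.ext
      obtain ⟨⟨x, b, c⟩, hp⟩ := p
      dsimp only
      refine Prod.ext ?_ (Prod.ext ?_ ?_) <;> simp
  rw [Nat.card_congr E, Nat.card_eq_fintype_card, Fintype.card_subtype]
  exact Tcount hℓ hn hδ2
end

section
/- Let ℓ ≥ 3 be a prime, n ≥ 1 an integer, and Δ ∈ Z/ℓ^n an element of odd ℓ-adic valuation k < n. Then the number of triples (x,y,z) ∈ (Z/ℓ^n)³ with xy = z² − Δ equals ℓ^{2n} + ℓ^{2n−1} − (ℓ+1)ℓ^{2n−(k+3)/2}. -/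
open Finset

section aux
variable {ℓ n : ℕ}

lemma pow_cast_eq (a : ℕ) : ((ℓ:ZMod (ℓ^n)))^a = ((ℓ^a : ℕ) : ZMod (ℓ^n)) := by push_cast; ring

lemma dvd_iff_val (hℓ : 2 ≤ ℓ) {a : ℕ} (ha : a ≤ n) (c : ZMod (ℓ^n)) :
    (ℓ : ZMod (ℓ^n))^a ∣ c ↔ ℓ^a ∣ c.val := by
  haveI : NeZero (ℓ^n) := ⟨pow_ne_zero n (by omega)⟩
  constructor
  · rintro ⟨d, rfl⟩
    rw [pow_cast_eq, ZMod.val_mul]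
    refine (Nat.dvd_mod_iff (pow_dvd_pow ℓ ha)).mpr (Dvd.dvd.mul_right ?_ _)
    rw [ZMod.val_natCast]
    exact (Nat.dvd_mod_iff (pow_dvd_pow ℓ ha)).mpr dvd_rfl
  · rintro ⟨d, hd⟩
    exact ⟨(d : ZMod (ℓ^n)), by rw [← ZMod.natCast_zmod_val c, hd]; push_cast; ring⟩

lemma card_dvd_val (hℓ : 2 ≤ ℓ) [NeZero (ℓ^n)] {b : ℕ} (hb : b ≤ n) :
    (univ.filter fun z : ZMod (ℓ^n) => ℓ^b ∣ z.val).card = ℓ^(n-b) := by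
  have hpos : 0 < ℓ^b := pow_pos (by omega) b
  rw [← Finset.card_range (ℓ^(n-b))]
  apply Finset.card_bij' (fun z _ => z.val / ℓ^b)
    (fun m _ => ((ℓ^b * m : ℕ) : ZMod (ℓ^n)))
  · intro z hz
    simp only [mem_filter, mem_univ, true_and] at hz
    simp only [mem_range]
    rw [Nat.div_lt_iff_lt_mul hpos, ← pow_add]
    have h1 : z.val < ℓ^n := ZMod.val_lt z
    have : n - b + b = n := by omega
    rw [this]; exact h1
  · intro m hm
    simp only [mem_range] at hm
    simp only [mem_filter, mem_univ, true_and]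
    rw [ZMod.val_natCast, Nat.mod_eq_of_lt]
    · exact Dvd.intro m rfl
    · calc ℓ^b * m < ℓ^b * ℓ^(n-b) := by
            exact (Nat.mul_lt_mul_left hpos).mpr hm
        _ = ℓ^n := by rw [← pow_add]; congr 1; omega
  · intro z hz
    simp only [mem_filter, mem_univ, true_and] at hz
    rw [Nat.mul_div_cancel' hz, ZMod.natCast_zmod_val]
  · intro m hm
    simp only [mem_range] at hm
    rw [ZMod.val_natCast, Nat.mod_eq_of_lt, Nat.mul_div_cancel_left _ hpos]
    calc ℓ^b * m < ℓ^b * ℓ^(n-b) := (Nat.mul_lt_mul_left hpos).mpr hm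
      _ = ℓ^n := by rw [← pow_add]; congr 1; omega

lemma card_ker (hℓ : 2 ≤ ℓ) [NeZero (ℓ^n)] {a : ℕ} (ha : a ≤ n) :
    (univ.filter fun y : ZMod (ℓ^n) => (ℓ:ZMod (ℓ^n))^a * y = 0).card = ℓ^a := by
  have key : ∀ y : ZMod (ℓ^n), ((ℓ:ZMod (ℓ^n))^a * y = 0) ↔ ℓ^(n-a) ∣ y.val := by
    intro y
    have h1 : (ℓ:ZMod (ℓ^n))^a * y = ((ℓ^a * y.val : ℕ) : ZMod (ℓ^n)) := by
      push_cast; rw [ZMod.natCast_zmod_val]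
    rw [h1, ZMod.natCast_eq_zero_iff]
    have h3 : ∀ w : ℕ, (ℓ^n ∣ ℓ^a * w ↔ ℓ^(n-a) ∣ w) := by
      intro w
      have h2 : ℓ^n = ℓ^a * ℓ^(n-a) := by rw [← pow_add]; congr 1; omega
      rw [h2, mul_dvd_mul_iff_left (pow_ne_zero a (by omega : (ℓ:ℕ) ≠ 0))]
    exact h3 y.val
  rw [Finset.filter_congr (fun y _ => key y), card_dvd_val hℓ (Nat.sub_le n a)]
  congr 1
  omega

open scoped Classical in
lemma card_fiber (hℓ : 2 ≤ ℓ) [NeZero (ℓ^n)] {a : ℕ} (ha : a ≤ n) (c : ZMod (ℓ^n)) :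
    (univ.filter fun y : ZMod (ℓ^n) => (ℓ:ZMod (ℓ^n))^a * y = c).card
      = if (ℓ:ZMod (ℓ^n))^a ∣ c then ℓ^a else 0 := by
  split_ifs with h
  · obtain ⟨d, rfl⟩ := h
    rw [← card_ker (n := n) hℓ ha]
    apply Finset.card_bij' (fun y _ => y - d) (fun w _ => w + d)
    · intro y hy
      simp only [mem_filter, mem_univ, true_and] at hy ⊢
      rw [mul_sub, hy, sub_self]
    · intro w hw
      simp only [mem_filter, mem_univ, true_and] at hw ⊢
      rw [mul_add, hw, zero_add]
    · intro y _; ring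
    · intro w _; ring
  · rw [Finset.card_eq_zero, Finset.filter_eq_empty_iff]
    intro y _ hy
    exact h ⟨y, hy.symm⟩

/-- valuation-like exponent of an element -/
noncomputable def axv (ℓ n : ℕ) (x : ZMod (ℓ^n)) : ℕ :=
  if x = 0 then n else padicValNat ℓ x.val

lemma axv_le (ℓ : ℕ) (hℓ : ℓ.Prime) (n : ℕ) [NeZero (ℓ^n)] (x : ZMod (ℓ^n)) :
    axv ℓ n x ≤ n := by
  unfold axv
  split_ifs with h
  · exact le_rfl
  · haveI : Fact ℓ.Prime := ⟨hℓ⟩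
    have hv : x.val ≠ 0 := fun h0 => h ((ZMod.val_eq_zero x).mp h0)
    have h1 : ℓ ^ padicValNat ℓ x.val ≤ x.val :=
      Nat.le_of_dvd (Nat.pos_of_ne_zero hv) pow_padicValNat_dvd
    have h2 : x.val < ℓ^n := ZMod.val_lt x
    exact le_of_lt ((Nat.pow_lt_pow_iff_right hℓ.one_lt).mp (lt_of_le_of_lt h1 h2))

lemma exists_unit (ℓ : ℕ) (hℓ : ℓ.Prime) (n : ℕ) [NeZero (ℓ^n)] (x : ZMod (ℓ^n)) :
    ∃ u : (ZMod (ℓ^n))ˣ, x = (ℓ:ZMod (ℓ^n))^(axv ℓ n x) * u := by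
  unfold axv
  haveI : Fact ℓ.Prime := ⟨hℓ⟩
  split_ifs with h
  · refine ⟨1, ?_⟩
    rw [pow_cast_eq, ZMod.natCast_self, zero_mul, h]
  · have hv : x.val ≠ 0 := fun h0 => h ((ZMod.val_eq_zero x).mp h0)
    have hdvd : ℓ^(padicValNat ℓ x.val) ∣ x.val := pow_padicValNat_dvd
    set v := padicValNat ℓ x.val with hvdef
    set m := x.val / ℓ^v with hm
    have hxm : x.val = ℓ^v * m := (Nat.mul_div_cancel' hdvd).symm
    have hnd : ¬ ℓ ∣ m := by
      intro hd
      apply pow_succ_padicValNat_not_dvd (p := ℓ) hv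
      rw [← hvdef, pow_succ, hxm]
      exact mul_dvd_mul_left _ hd
    have hcop : Nat.Coprime m (ℓ^n) :=
      Nat.Coprime.pow_right n ((hℓ.coprime_iff_not_dvd.mpr hnd).symm)
    refine ⟨ZMod.unitOfCoprime m hcop, ?_⟩
    rw [ZMod.coe_unitOfCoprime, pow_cast_eq, ← Nat.cast_mul, ← hxm, ZMod.natCast_zmod_val]

open scoped Classical in
lemma card_fiber_x (hℓ : ℓ.Prime) [NeZero (ℓ^n)] (x c : ZMod (ℓ^n)) :
    (univ.filter fun y => x * y = c).card
      = if (ℓ:ZMod (ℓ^n))^(axv ℓ n x) ∣ c then ℓ^(axv ℓ n x) else 0 := by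
  obtain ⟨u, hu⟩ := exists_unit ℓ hℓ n x
  set a := axv ℓ n x with hadef
  rw [← card_fiber hℓ.two_le (hadef ▸ axv_le ℓ hℓ n x) c]
  apply Finset.card_bij' (fun y _ => (u : ZMod (ℓ^n)) * y) (fun y _ => ((u⁻¹ : _) : ZMod (ℓ^n)) * y)
  · intro y hy
    simp only [mem_filter, mem_univ, true_and] at hy ⊢
    calc (ℓ:ZMod (ℓ^n))^a * ((u:ZMod (ℓ^n)) * y)
        = ((ℓ:ZMod (ℓ^n))^a * u) * y := by ring
      _ = x * y := by rw [← hu]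
      _ = c := hy
  · intro y hy
    simp only [mem_filter, mem_univ, true_and] at hy ⊢
    calc x * (((u⁻¹:_) : ZMod (ℓ^n)) * y)
        = (ℓ:ZMod (ℓ^n))^a * (((u : ZMod (ℓ^n))) * ((u⁻¹:_) : ZMod (ℓ^n))) * y := by
          rw [hu]; ring
      _ = (ℓ:ZMod (ℓ^n))^a * y := by rw [Units.mul_inv]; ring
      _ = c := hy
  · intro y _
    rw [← mul_assoc, Units.inv_mul, one_mul]
  · intro y _
    rw [← mul_assoc, Units.mul_inv, one_mul]

lemma axv_eq_iff (hℓ : ℓ.Prime) [NeZero (ℓ^n)] {a : ℕ} (ha : a < n) (x : ZMod (ℓ^n)) :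
    axv ℓ n x = a ↔ (ℓ^a ∣ x.val ∧ ¬ ℓ^(a+1) ∣ x.val) := by
  haveI : Fact ℓ.Prime := ⟨hℓ⟩
  unfold axv
  split_ifs with h
  · subst h
    refine iff_of_false (by omega) ?_
    simp
  · have hv : x.val ≠ 0 := fun h0 => h ((ZMod.val_eq_zero x).mp h0)
    rw [padicValNat_dvd_iff_le hv, padicValNat_dvd_iff_le hv]
    omega

lemma card_axv (hℓ : ℓ.Prime) [NeZero (ℓ^n)] {a : ℕ} (ha : a < n) :
    (univ.filter fun x : ZMod (ℓ^n) => axv ℓ n x = a).card = ℓ^(n-a) - ℓ^(n-a-1) := by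
  classical
  rw [Finset.filter_congr (fun x _ => axv_eq_iff hℓ ha x)]
  have hset : (univ.filter fun x : ZMod (ℓ^n) => ℓ^a ∣ x.val ∧ ¬ ℓ^(a+1) ∣ x.val)
      = (univ.filter fun x : ZMod (ℓ^n) => ℓ^a ∣ x.val)
        \ (univ.filter fun x : ZMod (ℓ^n) => ℓ^(a+1) ∣ x.val) := by
    ext x; simp [Finset.mem_sdiff]
  rw [hset, Finset.card_sdiff_of_subset]
  · rw [card_dvd_val hℓ.two_le (le_of_lt ha), card_dvd_val hℓ.two_le ha]
    congr 1
  · intro x hx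
    simp only [mem_filter, mem_univ, true_and] at hx ⊢
    exact dvd_trans (pow_dvd_pow ℓ (Nat.le_succ a)) hx

lemma sq_dvd_iff_val (hℓ : 2 ≤ ℓ) {w : ℕ} (hw : w ≤ n) (z : ZMod (ℓ^n)) :
    (ℓ : ZMod (ℓ^n))^w ∣ z^2 ↔ ℓ^w ∣ z.val^2 := by
  haveI : NeZero (ℓ^n) := ⟨pow_ne_zero n (by omega)⟩
  rw [dvd_iff_val hℓ hw, pow_two, pow_two, ZMod.val_mul,
    Nat.dvd_mod_iff (pow_dvd_pow ℓ hw)]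

lemma sq_val_dvd_up (hℓ : ℓ.Prime) {w : ℕ} (hodd : Odd w) (z : ZMod (ℓ^n))
    (h : ℓ^w ∣ z.val^2) : ℓ^(w+1) ∣ z.val^2 := by
  haveI : Fact ℓ.Prime := ⟨hℓ⟩
  obtain ⟨m, rfl⟩ := hodd
  rcases eq_or_ne z.val 0 with h0 | h0
  · rw [h0]; simp
  · have h2 : z.val^2 ≠ 0 := pow_ne_zero 2 h0
    rw [padicValNat_dvd_iff_le h2] at h ⊢
    rw [padicValNat.pow _ 2] at h ⊢
    omega

lemma pow_half_dvd_iff (hℓ : ℓ.Prime) {a : ℕ} (z : ZMod (ℓ^n)) :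
    ℓ^a ∣ z.val^2 ↔ ℓ^((a+1)/2) ∣ z.val := by
  haveI : Fact ℓ.Prime := ⟨hℓ⟩
  rcases eq_or_ne z.val 0 with h0 | h0
  · rw [h0]; simp
  · have h2 : z.val^2 ≠ 0 := pow_ne_zero 2 h0
    rw [padicValNat_dvd_iff_le h2, padicValNat_dvd_iff_le h0, padicValNat.pow _ 2]
    omega
end aux

section zcount
variable {ℓ n : ℕ} (hℓ : ℓ.Prime) [NeZero (ℓ^n)] {Δ : ZMod (ℓ^n)} (hΔ : Δ ≠ 0)
  {k : ℕ} (hk : k = padicValNat ℓ Δ.val) (hkn : k < n) (hodd : Odd k)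

include hℓ hΔ hk hkn in
open scoped Classical in
lemma count_sq {a : ℕ} (ha : a ≤ k) :
    (univ.filter fun z : ZMod (ℓ^n) => (ℓ:ZMod (ℓ^n))^a ∣ z^2 - Δ).card
      = ℓ^(n - (a+1)/2) := by
  haveI : Fact ℓ.Prime := ⟨hℓ⟩
  have hΔv : Δ.val ≠ 0 := fun h0 => hΔ ((ZMod.val_eq_zero Δ).mp h0)
  have hdvdΔ : (ℓ:ZMod (ℓ^n))^a ∣ Δ := by
    rw [dvd_iff_val hℓ.two_le (by omega), padicValNat_dvd_iff_le hΔv]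
    omega
  have key : ∀ z : ZMod (ℓ^n), ((ℓ:ZMod (ℓ^n))^a ∣ z^2 - Δ ↔ ℓ^((a+1)/2) ∣ z.val) := by
    intro z
    rw [dvd_sub_left hdvdΔ, sq_dvd_iff_val hℓ.two_le (by omega), pow_half_dvd_iff hℓ]
  classical
  rw [Finset.filter_congr (fun z _ => key z), card_dvd_val hℓ.two_le (by omega)]

include hℓ hΔ hk hkn hodd in
open scoped Classical in
lemma count_sq_zero {a : ℕ} (ha : k < a) :
    (univ.filter fun z : ZMod (ℓ^n) => (ℓ:ZMod (ℓ^n))^a ∣ z^2 - Δ).card = 0 := by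
  haveI : Fact ℓ.Prime := ⟨hℓ⟩
  have hΔv : Δ.val ≠ 0 := fun h0 => hΔ ((ZMod.val_eq_zero Δ).mp h0)
  rw [Finset.card_eq_zero, Finset.filter_eq_empty_iff]
  intro z _ hz
  have h1 : (ℓ:ZMod (ℓ^n))^(k+1) ∣ z^2 - Δ :=
    dvd_trans (pow_dvd_pow _ (by omega)) hz
  have h2 : (ℓ:ZMod (ℓ^n))^k ∣ z^2 := by
    have hdvdΔ : (ℓ:ZMod (ℓ^n))^k ∣ Δ := by
      rw [dvd_iff_val hℓ.two_le (by omega), padicValNat_dvd_iff_le hΔv]; omega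
    have := dvd_trans (pow_dvd_pow (ℓ:ZMod (ℓ^n)) (by omega : k ≤ k+1)) h1
    rw [dvd_sub_left hdvdΔ] at this
    exact this
  have h3 : (ℓ:ZMod (ℓ^n))^(k+1) ∣ z^2 := by
    rw [sq_dvd_iff_val hℓ.two_le (by omega)] at h2 ⊢
    exact sq_val_dvd_up hℓ hodd z h2
  have h4 : (ℓ:ZMod (ℓ^n))^(k+1) ∣ Δ := by
    have := dvd_sub h3 h1
    simpa using this
  rw [dvd_iff_val hℓ.two_le (by omega), padicValNat_dvd_iff_le hΔv] at h4
  omega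
end zcount

lemma final_sum {ℓ n : ℕ} : ∀ m : ℕ, 2*m+1 < n →
    ∑ a ∈ range (2*m+2), (((ℓ:ℤ)^(n-a) - (ℓ:ℤ)^(n-a-1)) * (ℓ:ℤ)^a * (ℓ:ℤ)^(n-(a+1)/2))
      = (ℓ:ℤ)^(2*n) + (ℓ:ℤ)^(2*n-1) - ((ℓ:ℤ)+1) * (ℓ:ℤ)^(2*n-(m+2)) := by
  intro m
  induction m with
  | zero =>
    intro h
    rw [show 2*0+2 = 2 by omega, Finset.sum_range_succ, Finset.sum_range_one]
    norm_num
    have h1 : (ℓ:ℤ)^(2*n) = ℓ^4 * ((ℓ:ℤ)^(n-2))^2 := by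
      rw [← pow_mul, ← pow_add]; congr 1; omega
    have h2 : (ℓ:ℤ)^(2*n-1) = ℓ^3 * ((ℓ:ℤ)^(n-2))^2 := by
      rw [← pow_mul, ← pow_add]; congr 1; omega
    have h3 : (ℓ:ℤ)^(2*n-(0+2)) = ℓ^2 * ((ℓ:ℤ)^(n-2))^2 := by
      rw [← pow_mul, ← pow_add]; congr 1; omega
    have h4 : (ℓ:ℤ)^n = ℓ^2 * (ℓ:ℤ)^(n-2) := by
      rw [← pow_add]; congr 1; omega
    have h5 : (ℓ:ℤ)^(n-1) = ℓ * (ℓ:ℤ)^(n-2) := by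
      rw [← pow_succ']; congr 1; omega
    have h6 : (ℓ:ℤ)^(n-1-1) = (ℓ:ℤ)^(n-2) := by congr 1
    rw [h1, h2, h3, h4, h5, h6]
    ring
  | succ m IH =>
    intro h
    rw [show 2*(m+1)+2 = (2*m+2)+1+1 by omega, Finset.sum_range_succ, Finset.sum_range_succ,
      IH (by omega)]
    have e1 : (2*m+2+1)/2 = m+1 := by omega
    have e2 : (2*m+2+1+1)/2 = m+2 := by omega
    have g1 : (ℓ:ℤ)^(n-(2*m+2)) = ℓ^2 * (ℓ:ℤ)^(n-(2*m+4)) := by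
      rw [← pow_add]; congr 1; omega
    have g2 : (ℓ:ℤ)^(n-(2*m+2)-1) = ℓ * (ℓ:ℤ)^(n-(2*m+4)) := by
      rw [← pow_succ']; congr 1; omega
    have g3 : (ℓ:ℤ)^(n-(2*m+2+1)) = ℓ * (ℓ:ℤ)^(n-(2*m+4)) := by
      rw [← pow_succ']; congr 1; omega
    have g4 : (ℓ:ℤ)^(n-(2*m+2+1)-1) = (ℓ:ℤ)^(n-(2*m+4)) := by
      congr 1
    have g5 : (ℓ:ℤ)^(2*m+2) = ((ℓ:ℤ)^m)^2 * ℓ^2 := by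
      rw [← pow_mul, ← pow_add]; congr 1; omega
    have g6 : (ℓ:ℤ)^(2*m+2+1) = ((ℓ:ℤ)^m)^2 * ℓ^3 := by
      rw [← pow_mul, ← pow_add]; congr 1; omega
    have g7 : (ℓ:ℤ)^(n-(m+1)) = (ℓ:ℤ)^m * ℓ^3 * (ℓ:ℤ)^(n-(2*m+4)) := by
      rw [← pow_add, ← pow_add]; congr 1; omega
    have g8 : (ℓ:ℤ)^(n-(m+2)) = (ℓ:ℤ)^m * ℓ^2 * (ℓ:ℤ)^(n-(2*m+4)) := by
      rw [← pow_add, ← pow_add]; congr 1; omega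
    have g9 : (ℓ:ℤ)^(2*n-(m+2)) = ((ℓ:ℤ)^(n-(2*m+4)))^2 * ((ℓ:ℤ)^m)^3 * ℓ^6 := by
      rw [← pow_mul, ← pow_mul, ← pow_add, ← pow_add]; congr 1; omega
    have g10 : (ℓ:ℤ)^(2*n-(m+1+2)) = ((ℓ:ℤ)^(n-(2*m+4)))^2 * ((ℓ:ℤ)^m)^3 * ℓ^5 := by
      rw [← pow_mul, ← pow_mul, ← pow_add, ← pow_add]; congr 1; omega
    rw [e1, e2, g9, g10, g1, g2, g3, g4, g5, g6, g7, g8]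
    ring

/-- Number of solutions of `x y = z² - Δ` over `Z/ℓ^n` when `Δ` has odd valuation `k < n`. -/
theorem stmt4 (ℓ : ℕ) (hℓ : ℓ.Prime) (h3 : 3 ≤ ℓ) (n : ℕ) (hn : 1 ≤ n)
    (Δ : ZMod (ℓ ^ n)) (hΔ : Δ ≠ 0) (k : ℕ) (hk : k = padicValNat ℓ Δ.val)
    (hodd : Odd k) (hkn : k < n) :
    (Nat.card {p : ZMod (ℓ ^ n) × ZMod (ℓ ^ n) × ZMod (ℓ ^ n) //
        p.1 * p.2.1 = p.2.2 ^ 2 - Δ} : ℤ) =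
      ℓ ^ (2 * n) + ℓ ^ (2 * n - 1) - (ℓ + 1) * ℓ ^ (2 * n - (k + 3) / 2) := by
  haveI : NeZero (ℓ^n) := ⟨pow_ne_zero n (by omega)⟩
  haveI : Fact ℓ.Prime := ⟨hℓ⟩
  classical
  have step1 : Nat.card {p : ZMod (ℓ ^ n) × ZMod (ℓ ^ n) × ZMod (ℓ ^ n) //
        p.1 * p.2.1 = p.2.2 ^ 2 - Δ}
      = ∑ x : ZMod (ℓ^n), ∑ z : ZMod (ℓ^n),
          (univ.filter fun y : ZMod (ℓ^n) => x * y = z^2 - Δ).card := by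
    rw [Nat.card_eq_fintype_card, Fintype.card_subtype]
    calc (univ.filter fun p : ZMod (ℓ^n) × ZMod (ℓ^n) × ZMod (ℓ^n) =>
            p.1 * p.2.1 = p.2.2^2 - Δ).card
        = ∑ p : ZMod (ℓ^n) × ZMod (ℓ^n) × ZMod (ℓ^n),
            if p.1 * p.2.1 = p.2.2^2 - Δ then 1 else 0 := Finset.card_filter _ _
      _ = ∑ x : ZMod (ℓ^n), ∑ y : ZMod (ℓ^n), ∑ z : ZMod (ℓ^n),
            if x * y = z^2 - Δ then 1 else 0 := by
          rw [Fintype.sum_prod_type]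
          exact Finset.sum_congr rfl fun x _ => Fintype.sum_prod_type _
      _ = ∑ x : ZMod (ℓ^n), ∑ z : ZMod (ℓ^n), ∑ y : ZMod (ℓ^n),
            if x * y = z^2 - Δ then 1 else 0 :=
          Finset.sum_congr rfl fun x _ => Finset.sum_comm
      _ = ∑ x : ZMod (ℓ^n), ∑ z : ZMod (ℓ^n),
            (univ.filter fun y : ZMod (ℓ^n) => x * y = z^2 - Δ).card :=
          Finset.sum_congr rfl fun x _ => Finset.sum_congr rfl fun z _ =>
            (Finset.card_filter _ _).symm
  have step2 : ∀ x : ZMod (ℓ^n), ∑ z : ZMod (ℓ^n),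
      (univ.filter fun y : ZMod (ℓ^n) => x * y = z^2 - Δ).card
      = ℓ^(axv ℓ n x) *
        (univ.filter fun z : ZMod (ℓ^n) => (ℓ:ZMod (ℓ^n))^(axv ℓ n x) ∣ z^2 - Δ).card := by
    intro x
    calc ∑ z : ZMod (ℓ^n), (univ.filter fun y : ZMod (ℓ^n) => x * y = z^2 - Δ).card
        = ∑ z : ZMod (ℓ^n), (if (ℓ:ZMod (ℓ^n))^(axv ℓ n x) ∣ z^2 - Δ
            then ℓ^(axv ℓ n x) else 0) :=
          Finset.sum_congr rfl fun z _ => card_fiber_x hℓ x _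
      _ = ∑ z ∈ (univ.filter fun z : ZMod (ℓ^n) => (ℓ:ZMod (ℓ^n))^(axv ℓ n x) ∣ z^2 - Δ),
            ℓ^(axv ℓ n x) := (Finset.sum_filter _ _).symm
      _ = _ := by rw [Finset.sum_const, smul_eq_mul, mul_comm]
  -- fiberwise over axv
  have step3 : (∑ x : ZMod (ℓ^n), (ℓ^(axv ℓ n x) *
        (univ.filter fun z : ZMod (ℓ^n) => (ℓ:ZMod (ℓ^n))^(axv ℓ n x) ∣ z^2 - Δ).card))
      = ∑ a ∈ range (n+1), (univ.filter fun x : ZMod (ℓ^n) => axv ℓ n x = a).card *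
          (ℓ^a * (univ.filter fun z : ZMod (ℓ^n) => (ℓ:ZMod (ℓ^n))^a ∣ z^2 - Δ).card) := by
    rw [← Finset.sum_fiberwise_of_maps_to
      (fun x _ => Finset.mem_range.mpr (Nat.lt_succ_of_le (axv_le ℓ hℓ n x)))
      (fun x => ℓ^(axv ℓ n x) *
        (univ.filter fun z : ZMod (ℓ^n) => (ℓ:ZMod (ℓ^n))^(axv ℓ n x) ∣ z^2 - Δ).card)]
    refine Finset.sum_congr rfl fun a _ => ?_
    rw [Finset.sum_congr rfl (fun x hx => ?_), Finset.sum_const, smul_eq_mul]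
    simp only [mem_filter, mem_univ, true_and] at hx
    rw [hx]
  -- kill terms with a > k
  have step4 : ∑ a ∈ range (n+1), (univ.filter fun x : ZMod (ℓ^n) => axv ℓ n x = a).card *
        (ℓ^a * (univ.filter fun z : ZMod (ℓ^n) => (ℓ:ZMod (ℓ^n))^a ∣ z^2 - Δ).card)
      = ∑ a ∈ range (k+1), (ℓ^(n-a) - ℓ^(n-a-1)) * (ℓ^a * ℓ^(n-(a+1)/2)) := by
    rw [← Finset.sum_subset (Finset.range_subset_range.mpr (by omega : k+1 ≤ n+1))]
    · refine Finset.sum_congr rfl fun a ha => ?_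
      rw [Finset.mem_range] at ha
      rw [card_axv hℓ (by omega), count_sq hℓ hΔ hk hkn (by omega)]
    · intro a ha hna
      rw [Finset.mem_range] at ha hna
      rw [count_sq_zero hℓ hΔ hk hkn hodd (by omega)]
      ring
  obtain ⟨m, hm⟩ := hodd
  have hcast : ((∑ a ∈ range (k+1), (ℓ^(n-a) - ℓ^(n-a-1)) * (ℓ^a * ℓ^(n-(a+1)/2)) : ℕ) : ℤ)
      = ∑ a ∈ range (2*m+2),
          (((ℓ:ℤ)^(n-a) - (ℓ:ℤ)^(n-a-1)) * (ℓ:ℤ)^a * (ℓ:ℤ)^(n-(a+1)/2)) := by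
    rw [show k+1 = 2*m+2 by omega]
    push_cast
    refine Finset.sum_congr rfl fun a ha => ?_
    rw [Nat.cast_sub (pow_le_pow_right₀ (by omega) (by omega))]
    push_cast
    ring
  rw [step1]
  rw [Finset.sum_congr rfl fun x _ => step2 x, step3, step4, hcast,
    final_sum m (by omega)]
  have : 2*n - (k+3)/2 = 2*n - (m+2) := by omega
  rw [this]
end

section
/- Let ℓ ≥ 3 be a prime and n ≥ 1 an even integer. Then the number of triples (x,y,z) ∈ (Z/ℓ^n)³ with xy = z² equals ℓ^{2n} + ℓ^{2n−1} − ℓ^{3n/2−1}. If instead n is odd, the number of such triples equals ℓ^{2n} + ℓ^{2n−1} − ℓ^{(3n−1)/2}. -/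
open Function

private def Sol (N : ℕ) : Type :=
  {p : ZMod N × ZMod N × ZMod N // p.1 * p.2.1 = p.2.2 ^ 2}

/- generic fiber counting -/
private def subtypeCompEquivSigma {α β : Type*} (f : α → β) (P : β → Prop) :
    {x // P (f x)} ≃ Σ y : {y // P y}, {x // f x = y.1} where
  toFun s := ⟨⟨f s.1, s.2⟩, ⟨s.1, rfl⟩⟩
  invFun t := ⟨t.2.1, by rw [t.2.2]; exact t.1.2⟩
  left_inv s := rfl
  right_inv := by
    rintro ⟨⟨y, hy⟩, ⟨x, hx⟩⟩
    simp only [Subtype.coe_mk] at hx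
    subst hx
    rfl

private noncomputable def fiberEquivKer {α β : Type*} [AddCommGroup α] [AddCommGroup β]
    (f : α →+ β) (hs : Surjective f) (y : β) : {x // f x = y} ≃ {x // f x = 0} where
  toFun s := ⟨s.1 - (hs y).choose, by rw [map_sub, s.2, (hs y).choose_spec, sub_self]⟩
  invFun s := ⟨s.1 + (hs y).choose, by rw [map_add, s.2, (hs y).choose_spec, zero_add]⟩
  left_inv s := by ext; simp
  right_inv s := by ext; simp

private lemma card_comp {α β : Type*} [AddCommGroup α] [AddCommGroup β]
    (f : α →+ β) (hs : Surjective f) (P : β → Prop) :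
    Nat.card {x // P (f x)} = Nat.card {y // P y} * Nat.card {x : α // f x = 0} := by
  rw [← Nat.card_prod]
  exact Nat.card_congr ((subtypeCompEquivSigma f P).trans
    ((Equiv.sigmaCongrRight fun (y : {y // P y}) => fiberEquivKer f hs y.1).trans (Equiv.sigmaEquivProd _ _)))

/- base case n = 0 -/
private lemma card_sol_one : Nat.card (Sol 1) = 1 := by
  have : Subsingleton (Sol 1) := by unfold Sol; infer_instance
  have : Nonempty (Sol 1) := ⟨⟨(0, 0, 0), by decide⟩⟩
  exact Nat.card_unique

/- base case n = 1 -/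
private noncomputable def solEquivField (ℓ : ℕ) (hℓ : ℓ.Prime) :
    Sol ℓ ≃ ZMod ℓ × ZMod ℓ := by
  haveI := Fact.mk hℓ
  exact
  { toFun := fun s => if s.1.1 = 0 then (0, s.1.2.1) else (s.1.1, s.1.2.2)
    invFun := fun p => if h : p.1 = 0 then ⟨(0, p.2, 0), by ring⟩
      else ⟨(p.1, p.1⁻¹ * p.2 ^ 2, p.2), by rw [← mul_assoc, mul_inv_cancel₀ h, one_mul]⟩
    left_inv := by
      rintro ⟨⟨x, y, z⟩, hs⟩
      by_cases hx : x = 0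
      · have hz : z = 0 := by
          have h2 : z ^ 2 = 0 := by rw [← hs, hx, zero_mul]
          exact pow_eq_zero_iff two_ne_zero |>.mp h2
        subst hx hz
        simp
        rfl
      · have hy : y = x⁻¹ * z ^ 2 := by
          field_simp
          rw [mul_comm, hs]
        simp only [if_neg hx]
        refine (dif_neg (show ¬ (if x = 0 then ((0 : ZMod ℓ), y) else (x, z)).1 = 0 by rw [if_neg hx]; exact hx)).trans (Subtype.ext ?_)
        simp [← hy]
    right_inv := by
      rintro ⟨a, b⟩
      by_cases ha : a = 0
      · simp [ha]
      · simp [ha] }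

private lemma card_sol_prime (ℓ : ℕ) (hℓ : ℓ.Prime) : Nat.card (Sol ℓ) = ℓ ^ 2 := by
  rw [Nat.card_congr (solEquivField ℓ hℓ), Nat.card_prod, Nat.card_zmod, sq]

section Emb

variable {ℓ : ℕ}

private def emb (ℓ m : ℕ) (a : ZMod (ℓ ^ (m + 1))) : ZMod (ℓ ^ (m + 2)) :=
  ((ℓ * a.val : ℕ) : ZMod (ℓ ^ (m + 2)))

private lemma nz (hℓ : ℓ.Prime) (k : ℕ) : NeZero (ℓ ^ k) := ⟨pow_ne_zero _ hℓ.pos.ne'⟩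

private lemma emb_lt (hℓ : ℓ.Prime) (m : ℕ) (a : ZMod (ℓ ^ (m + 1))) : ℓ * a.val < ℓ ^ (m + 2) := by
  haveI := nz hℓ (m + 1)
  calc ℓ * a.val < ℓ * ℓ ^ (m + 1) := (Nat.mul_lt_mul_left hℓ.pos).mpr (ZMod.val_lt a)
  _ = ℓ ^ (m + 2) := by ring

private lemma emb_inj (hℓ : ℓ.Prime) (m : ℕ) : Injective (emb ℓ m) := by
  intro a b hab
  haveI := nz hℓ (m + 2)
  have h1 : (ℓ * a.val : ℕ) = (ℓ * b.val : ℕ) := by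
    have := congrArg ZMod.val hab
    rwa [emb, emb, ZMod.val_cast_of_lt (emb_lt hℓ m a), ZMod.val_cast_of_lt (emb_lt hℓ m b)] at this
  haveI := nz hℓ (m + 1)
  have h2 : a.val = b.val := Nat.eq_of_mul_eq_mul_left hℓ.pos h1
  exact ZMod.val_injective _ h2

private lemma emb_not_unit (hℓ : ℓ.Prime) (m : ℕ) (a : ZMod (ℓ ^ (m + 1))) : ¬ IsUnit (emb ℓ m a) := by
  rw [emb, ZMod.isUnit_iff_coprime, Nat.coprime_pow_right_iff (Nat.succ_pos _)]
  intro h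
  have : ℓ ∣ Nat.gcd (ℓ * a.val) ℓ := Nat.dvd_gcd ⟨a.val, rfl⟩ dvd_rfl
  rw [h] at this
  exact hℓ.one_lt.ne' (Nat.dvd_one.mp this)

end Emb

private lemma nonunit_exists_emb {ℓ : ℕ} (hℓ : ℓ.Prime) (m : ℕ)
    (x : ZMod (ℓ ^ (m + 2))) (hx : ¬ IsUnit x) : ∃ a, emb ℓ m a = x := by
  haveI := nz hℓ (m + 2)
  haveI := nz hℓ (m + 1)
  have hdvd : ℓ ∣ x.val := by
    by_contra hd
    apply hx
    have : IsUnit ((x.val : ℕ) : ZMod (ℓ ^ (m + 2))) := by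
      rw [ZMod.isUnit_iff_coprime, Nat.coprime_pow_right_iff (Nat.succ_pos _)]
      exact Nat.coprime_comm.mp ((hℓ.coprime_iff_not_dvd).mpr hd)
    rwa [ZMod.natCast_val, ZMod.cast_id] at this
  refine ⟨((x.val / ℓ : ℕ) : ZMod (ℓ ^ (m + 1))), ?_⟩
  have hlt : x.val / ℓ < ℓ ^ (m + 1) := by
    rw [Nat.div_lt_iff_lt_mul hℓ.pos]
    calc x.val < ℓ ^ (m + 2) := ZMod.val_lt x
    _ = ℓ ^ (m + 1) * ℓ := by ring
  rw [emb, ZMod.val_cast_of_lt hlt, Nat.mul_div_cancel' hdvd, ZMod.natCast_val, ZMod.cast_id]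

private lemma emb_eq_iff {ℓ : ℕ} (hℓ : ℓ.Prime) (m : ℕ) (a b c : ZMod (ℓ ^ (m + 1))) :
    emb ℓ m a * emb ℓ m b = (emb ℓ m c) ^ 2 ↔
      ((a.val : ZMod (ℓ ^ m)) * (b.val : ZMod (ℓ ^ m)) = (c.val : ZMod (ℓ ^ m)) ^ 2) := by
  rw [emb, emb, emb, ← Nat.cast_mul, ← Nat.cast_pow, ZMod.natCast_eq_natCast_iff,
    ← Nat.cast_mul, ← Nat.cast_pow, ZMod.natCast_eq_natCast_iff,
    Nat.modEq_iff_dvd, Nat.modEq_iff_dvd]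
  have e1 : ((ℓ ^ (m + 2) : ℕ) : ℤ) = (ℓ : ℤ) ^ 2 * (ℓ : ℤ) ^ m := by push_cast; ring
  have e2 : (((ℓ * c.val) ^ 2 : ℕ) : ℤ) - ((ℓ * a.val * (ℓ * b.val) : ℕ) : ℤ) =
      (ℓ : ℤ) ^ 2 * (((c.val ^ 2 : ℕ) : ℤ) - ((a.val * b.val : ℕ) : ℤ)) := by push_cast; ring
  rw [e1, e2, mul_dvd_mul_iff_left (pow_ne_zero 2 (by exact_mod_cast hℓ.pos.ne' : (ℓ:ℤ) ≠ 0))]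
  norm_cast

private abbrev Z3 (N : ℕ) : Type := ZMod N × ZMod N × ZMod N

/- split into three parts -/
private lemma card_split (N : ℕ) [NeZero N] :
    Nat.card (Sol N) =
      Nat.card {p : Z3 N // p.1 * p.2.1 = p.2.2 ^ 2 ∧ IsUnit p.1}
      + Nat.card {p : Z3 N // (p.1 * p.2.1 = p.2.2 ^ 2 ∧ ¬ IsUnit p.1) ∧ IsUnit p.2.1}
      + Nat.card {p : Z3 N // (p.1 * p.2.1 = p.2.2 ^ 2 ∧ ¬ IsUnit p.1) ∧ ¬ IsUnit p.2.1} := by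
  classical
  haveI : Finite (Sol N) := by unfold Sol; infer_instance
  have e0 : Sol N ≃ {p : Z3 N // p.1 * p.2.1 = p.2.2 ^ 2} := Equiv.refl _
  have e1 : {p : Z3 N // p.1 * p.2.1 = p.2.2 ^ 2} ≃
      {s : {p : Z3 N // p.1 * p.2.1 = p.2.2 ^ 2} // IsUnit s.1.1} ⊕
      {s : {p : Z3 N // p.1 * p.2.1 = p.2.2 ^ 2} // ¬ IsUnit s.1.1} :=
    (Equiv.sumCompl _).symm
  have e2 : {s : {p : Z3 N // p.1 * p.2.1 = p.2.2 ^ 2} // IsUnit s.1.1} ≃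
      {p : Z3 N // p.1 * p.2.1 = p.2.2 ^ 2 ∧ IsUnit p.1} :=
    Equiv.subtypeSubtypeEquivSubtypeInter (fun p : Z3 N => p.1 * p.2.1 = p.2.2 ^ 2)
      (fun p => IsUnit p.1)
  have e3 : {s : {p : Z3 N // p.1 * p.2.1 = p.2.2 ^ 2} // ¬ IsUnit s.1.1} ≃
      {p : Z3 N // p.1 * p.2.1 = p.2.2 ^ 2 ∧ ¬ IsUnit p.1} :=
    Equiv.subtypeSubtypeEquivSubtypeInter (fun p : Z3 N => p.1 * p.2.1 = p.2.2 ^ 2)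
      (fun p => ¬ IsUnit p.1)
  have e4 : {p : Z3 N // p.1 * p.2.1 = p.2.2 ^ 2 ∧ ¬ IsUnit p.1} ≃
      {s : {p : Z3 N // p.1 * p.2.1 = p.2.2 ^ 2 ∧ ¬ IsUnit p.1} // IsUnit s.1.2.1} ⊕
      {s : {p : Z3 N // p.1 * p.2.1 = p.2.2 ^ 2 ∧ ¬ IsUnit p.1} // ¬ IsUnit s.1.2.1} :=
    (Equiv.sumCompl _).symm
  have e5 : {s : {p : Z3 N // p.1 * p.2.1 = p.2.2 ^ 2 ∧ ¬ IsUnit p.1} // IsUnit s.1.2.1} ≃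
      {p : Z3 N // (p.1 * p.2.1 = p.2.2 ^ 2 ∧ ¬ IsUnit p.1) ∧ IsUnit p.2.1} :=
    Equiv.subtypeSubtypeEquivSubtypeInter
      (fun p : Z3 N => p.1 * p.2.1 = p.2.2 ^ 2 ∧ ¬ IsUnit p.1) (fun p => IsUnit p.2.1)
  have e6 : {s : {p : Z3 N // p.1 * p.2.1 = p.2.2 ^ 2 ∧ ¬ IsUnit p.1} // ¬ IsUnit s.1.2.1} ≃
      {p : Z3 N // (p.1 * p.2.1 = p.2.2 ^ 2 ∧ ¬ IsUnit p.1) ∧ ¬ IsUnit p.2.1} :=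
    Equiv.subtypeSubtypeEquivSubtypeInter
      (fun p : Z3 N => p.1 * p.2.1 = p.2.2 ^ 2 ∧ ¬ IsUnit p.1) (fun p => ¬ IsUnit p.2.1)
  rw [Nat.card_congr (e0.trans e1), Nat.card_sum, Nat.card_congr e2,
    Nat.card_congr (e3.trans e4), Nat.card_sum, Nat.card_congr e5, Nat.card_congr e6]
  ring

private noncomputable def equivUnitFst (N : ℕ) :
    {p : Z3 N // p.1 * p.2.1 = p.2.2 ^ 2 ∧ IsUnit p.1} ≃ (ZMod N)ˣ × ZMod N where
  toFun s := (s.2.2.unit, s.1.2.2)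
  invFun q := ⟨((q.1 : ZMod N), (q.1⁻¹ : (ZMod N)ˣ) * q.2 ^ 2, q.2),
    by rw [← mul_assoc, Units.mul_inv, one_mul], q.1.isUnit⟩
  left_inv := by
    rintro ⟨⟨x, y, z⟩, heq, hx⟩
    apply Subtype.ext
    have h1 : (hx.unit : ZMod N) = x := hx.unit_spec
    refine Prod.ext h1 (Prod.ext ?_ rfl)
    show ((hx.unit⁻¹ : (ZMod N)ˣ) : ZMod N) * z ^ 2 = y
    have h2 : (hx.unit : ZMod N) * y = z ^ 2 := by rw [h1]; exact heq
    rw [← h2, ← mul_assoc, Units.inv_mul, one_mul]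
  right_inv := by
    rintro ⟨u, z⟩
    refine Prod.ext (Units.ext ?_) rfl
    simp

private noncomputable def equivUnitSnd (N : ℕ) :
    {p : Z3 N // (p.1 * p.2.1 = p.2.2 ^ 2 ∧ ¬ IsUnit p.1) ∧ IsUnit p.2.1} ≃
      (ZMod N)ˣ × {z : ZMod N // ¬ IsUnit z} where
  toFun := fun ⟨⟨x, y, z⟩, ⟨heq, hx⟩, hy⟩ =>
    (hy.unit, ⟨z, fun hz => hx (isUnit_of_mul_isUnit_left
      (show IsUnit (x * y) by rw [heq]; exact hz.pow 2))⟩)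
  invFun q := ⟨(q.2.1 ^ 2 * (q.1⁻¹ : (ZMod N)ˣ), (q.1 : ZMod N), q.2.1),
    ⟨by rw [mul_assoc, Units.inv_mul, mul_one],
     by
      rintro hx
      apply q.2.2
      have h2 : IsUnit (q.2.1 ^ 2) := by
        have h3 := hx.mul q.1.isUnit
        rwa [mul_assoc, Units.inv_mul, mul_one] at h3
      exact (isUnit_pow_iff two_ne_zero).mp h2⟩,
    q.1.isUnit⟩
  left_inv := by
    rintro ⟨⟨x, y, z⟩, ⟨heq, hx⟩, hy⟩
    apply Subtype.ext
    have h1 : (hy.unit : ZMod N) = y := hy.unit_spec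
    refine Prod.ext ?_ (Prod.ext h1 rfl)
    show z ^ 2 * ((hy.unit⁻¹ : (ZMod N)ˣ) : ZMod N) = x
    have h2 : x * (hy.unit : ZMod N) = z ^ 2 := by rw [h1]; exact heq
    rw [← h2, mul_assoc, Units.mul_inv, mul_one]
  right_inv := by
    rintro ⟨u, z, hz⟩
    refine Prod.ext (Units.ext ?_) rfl
    simp

private noncomputable def nonunitEquiv {ℓ : ℕ} (hℓ : ℓ.Prime) (m : ℕ) :
    {z : ZMod (ℓ ^ (m + 2)) // ¬ IsUnit z} ≃ ZMod (ℓ ^ (m + 1)) :=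
  (Equiv.ofBijective (fun a => (⟨emb ℓ m a, emb_not_unit hℓ m a⟩ :
      {z : ZMod (ℓ ^ (m + 2)) // ¬ IsUnit z}))
    ⟨fun a b hab => emb_inj hℓ m (congrArg Subtype.val hab),
     fun z => by
      obtain ⟨a, ha⟩ := nonunit_exists_emb hℓ m z.1 z.2
      exact ⟨a, Subtype.ext ha⟩⟩).symm

private noncomputable def ctg (ℓ m : ℕ) : ZMod (ℓ ^ (m + 1)) →+ ZMod (ℓ ^ m) :=
  (ZMod.castHom (pow_dvd_pow ℓ (Nat.le_succ m)) (ZMod (ℓ ^ m))).toAddMonoidHom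

private noncomputable def ct (ℓ m : ℕ) : Z3 (ℓ ^ (m + 1)) →+ Z3 (ℓ ^ m) :=
  (ctg ℓ m).prodMap ((ctg ℓ m).prodMap (ctg ℓ m))

private lemma ctg_surj (ℓ m : ℕ) [NeZero (ℓ ^ m)] : Function.Surjective (ctg ℓ m) := by
  intro y
  refine ⟨((y.val : ℕ) : ZMod (ℓ ^ (m + 1))), ?_⟩
  show (ZMod.castHom (pow_dvd_pow ℓ (Nat.le_succ m)) (ZMod (ℓ ^ m)))
      ((y.val : ℕ) : ZMod (ℓ ^ (m + 1))) = y
  rw [map_natCast, ZMod.natCast_val, ZMod.cast_id]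

private lemma ct_surj (ℓ m : ℕ) [NeZero (ℓ ^ m)] : Function.Surjective (ct ℓ m) := by
  rintro ⟨a, b, c⟩
  obtain ⟨a', ha⟩ := ctg_surj ℓ m a
  obtain ⟨b', hb⟩ := ctg_surj ℓ m b
  obtain ⟨c', hc⟩ := ctg_surj ℓ m c
  exact ⟨(a', b', c'), by simp [ct, ha, hb, hc]⟩

private lemma emb_eq_iff' {ℓ : ℕ} (hℓ : ℓ.Prime) (m : ℕ) (a b c : ZMod (ℓ ^ (m + 1))) :
    emb ℓ m a * emb ℓ m b = (emb ℓ m c) ^ 2 ↔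
      ctg ℓ m a * ctg ℓ m b = (ctg ℓ m c) ^ 2 := by
  haveI := nz hℓ (m + 1)
  rw [emb_eq_iff hℓ m a b c]
  show _ ↔ (ZMod.castHom (pow_dvd_pow ℓ (Nat.le_succ m)) (ZMod (ℓ ^ m))) a *
      (ZMod.castHom (pow_dvd_pow ℓ (Nat.le_succ m)) (ZMod (ℓ ^ m))) b =
      ((ZMod.castHom (pow_dvd_pow ℓ (Nat.le_succ m)) (ZMod (ℓ ^ m))) c) ^ 2
  rw [ZMod.castHom_apply, ZMod.castHom_apply, ZMod.castHom_apply,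
    ← ZMod.natCast_val, ← ZMod.natCast_val, ← ZMod.natCast_val]

private noncomputable def equivNonunit {ℓ : ℕ} (hℓ : ℓ.Prime) (m : ℕ) :
    {q : Z3 (ℓ ^ (m + 1)) // (ct ℓ m q).1 * (ct ℓ m q).2.1 = (ct ℓ m q).2.2 ^ 2} ≃
      {p : Z3 (ℓ ^ (m + 2)) //
        (p.1 * p.2.1 = p.2.2 ^ 2 ∧ ¬ IsUnit p.1) ∧ ¬ IsUnit p.2.1} := by
  refine Equiv.ofBijective
    (fun q => ⟨(emb ℓ m q.1.1, emb ℓ m q.1.2.1, emb ℓ m q.1.2.2),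
      ⟨(emb_eq_iff' hℓ m _ _ _).mpr q.2, emb_not_unit hℓ m _⟩, emb_not_unit hℓ m _⟩)
    ⟨?_, ?_⟩
  · rintro ⟨⟨a, b, c⟩, hq⟩ ⟨⟨a', b', c'⟩, hq'⟩ h
    have h1 := congrArg (fun s => s.1.1) h
    have h2 := congrArg (fun s => s.1.2.1) h
    have h3 := congrArg (fun s => s.1.2.2) h
    simp only at h1 h2 h3
    exact Subtype.ext (Prod.ext (emb_inj hℓ m h1)
      (Prod.ext (emb_inj hℓ m h2) (emb_inj hℓ m h3)))
  · rintro ⟨⟨x, y, z⟩, ⟨heq, hx⟩, hy⟩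
    have hz : ¬ IsUnit z := fun hz =>
      hx (isUnit_of_mul_isUnit_left (show IsUnit (x * y) by rw [heq]; exact hz.pow 2))
    obtain ⟨a, ha⟩ := nonunit_exists_emb hℓ m x hx
    obtain ⟨b, hb⟩ := nonunit_exists_emb hℓ m y hy
    obtain ⟨c, hc⟩ := nonunit_exists_emb hℓ m z hz
    refine ⟨⟨(a, b, c), (emb_eq_iff' hℓ m a b c).mp ?_⟩, ?_⟩
    · rw [ha, hb, hc]; exact heq
    · exact Subtype.ext (Prod.ext ha (Prod.ext hb hc))

private lemma card_ker_s6 {ℓ : ℕ} (hℓ : ℓ.Prime) (m : ℕ) :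
    Nat.card {x : Z3 (ℓ ^ (m + 1)) // ct ℓ m x = 0} = ℓ ^ 3 := by
  haveI := nz hℓ m
  haveI := nz hℓ (m + 1)
  have h1 := card_comp (ct ℓ m) (ct_surj ℓ m) (fun _ => True)
  rw [Nat.card_congr (Equiv.subtypeUnivEquiv (fun _ => trivial)),
    Nat.card_congr (Equiv.subtypeUnivEquiv (fun _ => trivial))] at h1
  have h2 : Nat.card (Z3 (ℓ ^ (m + 1))) = ℓ ^ (3 * (m + 1)) := by
    rw [Nat.card_prod, Nat.card_prod, Nat.card_zmod]
    ring
  have h3 : Nat.card (Z3 (ℓ ^ m)) = ℓ ^ (3 * m) := by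
    rw [Nat.card_prod, Nat.card_prod, Nat.card_zmod]
    ring
  rw [h2, h3] at h1
  have h4 : ℓ ^ (3 * m) * Nat.card {x : Z3 (ℓ ^ (m + 1)) // ct ℓ m x = 0} =
      ℓ ^ (3 * m) * ℓ ^ 3 := by
    rw [← h1, ← pow_add]
    ring_nf
  exact Nat.eq_of_mul_eq_mul_left (pow_pos hℓ.pos _) h4

private lemma card_nonunit_part {ℓ : ℕ} (hℓ : ℓ.Prime) (m : ℕ) :
    Nat.card {p : Z3 (ℓ ^ (m + 2)) //
        (p.1 * p.2.1 = p.2.2 ^ 2 ∧ ¬ IsUnit p.1) ∧ ¬ IsUnit p.2.1} =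
      Nat.card (Sol (ℓ ^ m)) * ℓ ^ 3 := by
  haveI := nz hℓ m
  rw [← Nat.card_congr (equivNonunit hℓ m)]
  have h1 := card_comp (ct ℓ m) (ct_surj ℓ m)
    (fun p : Z3 (ℓ ^ m) => p.1 * p.2.1 = p.2.2 ^ 2)
  rw [card_ker_s6 hℓ m] at h1
  exact h1

private lemma card_step {ℓ : ℕ} (hℓ : ℓ.Prime) (m : ℕ) :
    Nat.card (Sol (ℓ ^ (m + 2))) =
      (ℓ ^ (m + 2)).totient * ℓ ^ (m + 2) + (ℓ ^ (m + 2)).totient * ℓ ^ (m + 1)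
        + Nat.card (Sol (ℓ ^ m)) * ℓ ^ 3 := by
  haveI := nz hℓ (m + 2)
  haveI := nz hℓ (m + 1)
  have hu : Nat.card (ZMod (ℓ ^ (m + 2)))ˣ = (ℓ ^ (m + 2)).totient := by
    rw [Nat.card_eq_fintype_card, ZMod.card_units_eq_totient]
  rw [card_split (ℓ ^ (m + 2)), Nat.card_congr (equivUnitFst _),
    Nat.card_congr (equivUnitSnd _), card_nonunit_part hℓ m,
    Nat.card_prod, Nat.card_prod, hu, Nat.card_zmod,
    Nat.card_congr (nonunitEquiv hℓ m), Nat.card_zmod]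

private theorem card_formula {ℓ : ℕ} (hℓ : ℓ.Prime) : ∀ n : ℕ,
    (Nat.card (Sol (ℓ ^ n)) : ℤ) =
      if Even n then (ℓ : ℤ) ^ (2 * n) + (ℓ : ℤ) ^ (2 * n - 1) - (ℓ : ℤ) ^ (3 * n / 2 - 1)
      else (ℓ : ℤ) ^ (2 * n) + (ℓ : ℤ) ^ (2 * n - 1) - (ℓ : ℤ) ^ ((3 * n - 1) / 2)
  | 0 => by
    rw [if_pos Even.zero]
    have h0 : Nat.card (Sol (ℓ ^ 0)) = 1 := by rw [pow_zero]; exact card_sol_one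
    rw [h0]
    norm_num
  | 1 => by
    rw [if_neg Nat.not_even_one]
    have h1 : Nat.card (Sol (ℓ ^ 1)) = ℓ ^ 2 := by rw [pow_one]; exact card_sol_prime ℓ hℓ
    rw [h1]
    norm_num
  | (m + 2) => by
    have IH := card_formula hℓ m
    have ht : (ℓ ^ (m + 2)).totient = ℓ ^ (m + 1) * (ℓ - 1) := by
      rw [Nat.totient_prime_pow hℓ (by omega)]
      norm_num
    have hstep := card_step hℓ m
    rw [ht] at hstep
    have hz := congrArg (Nat.cast : ℕ → ℤ) hstep
    push_cast [Nat.cast_sub hℓ.one_lt.le] at hz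
    rcases Nat.even_or_odd m with he | ho
    · rw [if_pos he] at IH
      rw [if_pos (he.add even_two)]
      rw [hz, IH]
      obtain ⟨k, hk⟩ := he
      subst hk
      rcases k with _ | j
      · norm_num
        ring
      · rw [show 2 * (j + 1 + (j + 1) + 2) - 1 = 4 * j + 7 by omega,
          show 3 * (j + 1 + (j + 1) + 2) / 2 - 1 = 3 * j + 5 by omega,
          show 2 * (j + 1 + (j + 1) + 2) = 4 * j + 8 by omega,
          show 2 * (j + 1 + (j + 1)) - 1 = 4 * j + 3 by omega,
          show 3 * (j + 1 + (j + 1)) / 2 - 1 = 3 * j + 2 by omega,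
          show 2 * (j + 1 + (j + 1)) = 4 * j + 4 by omega,
          show j + 1 + (j + 1) + 1 = 2 * j + 3 by omega,
          show j + 1 + (j + 1) + 2 = 2 * j + 4 by omega]
        ring
    · rw [if_neg (Nat.not_even_iff_odd.mpr ho)] at IH
      rw [if_neg (Nat.not_even_iff_odd.mpr (ho.add_even even_two))]
      rw [hz, IH]
      obtain ⟨k, hk⟩ := ho
      subst hk
      rw [show 2 * (2 * k + 1 + 2) - 1 = 4 * k + 5 by omega,
        show (3 * (2 * k + 1 + 2) - 1) / 2 = 3 * k + 4 by omega,
        show 2 * (2 * k + 1 + 2) = 4 * k + 6 by omega,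
        show 2 * (2 * k + 1) - 1 = 4 * k + 1 by omega,
        show (3 * (2 * k + 1) - 1) / 2 = 3 * k + 1 by omega,
        show 2 * (2 * k + 1) = 4 * k + 2 by omega,
        show 2 * k + 1 + 1 = 2 * k + 2 by omega,
        show 2 * k + 1 + 2 = 2 * k + 3 by omega]
      ring

/-- Number of solutions of `x y = z²` over `Z/ℓ^n`. -/
theorem stmt6 (ℓ : ℕ) (hℓ : ℓ.Prime) (h3 : 3 ≤ ℓ) (n : ℕ) (hn : 1 ≤ n) :
    (Nat.card {p : ZMod (ℓ ^ n) × ZMod (ℓ ^ n) × ZMod (ℓ ^ n) //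
        p.1 * p.2.1 = p.2.2 ^ 2} : ℤ) =
      if Even n then ℓ ^ (2 * n) + ℓ ^ (2 * n - 1) - ℓ ^ (3 * n / 2 - 1)
      else ℓ ^ (2 * n) + ℓ ^ (2 * n - 1) - ℓ ^ ((3 * n - 1) / 2) := by
  have key := card_formula hℓ n
  have hl1 : 1 ≤ ℓ := hℓ.one_le
  rcases Nat.even_or_odd n with he | ho
  · rw [if_pos he] at key ⊢
    rw [show (Nat.card {p : ZMod (ℓ ^ n) × ZMod (ℓ ^ n) × ZMod (ℓ ^ n) //
        p.1 * p.2.1 = p.2.2 ^ 2} : ℤ) = (Nat.card (Sol (ℓ ^ n)) : ℤ) from rfl, key]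
    have hle : ℓ ^ (3 * n / 2 - 1) ≤ ℓ ^ (2 * n) + ℓ ^ (2 * n - 1) :=
      le_trans (Nat.pow_le_pow_right hl1 (by omega)) (Nat.le_add_right _ _)
    push_cast [Nat.cast_sub hle]
    ring
  · rw [if_neg (Nat.not_even_iff_odd.mpr ho)] at key ⊢
    rw [show (Nat.card {p : ZMod (ℓ ^ n) × ZMod (ℓ ^ n) × ZMod (ℓ ^ n) //
        p.1 * p.2.1 = p.2.2 ^ 2} : ℤ) = (Nat.card (Sol (ℓ ^ n)) : ℤ) from rfl, key]
    have hle : ℓ ^ ((3 * n - 1) / 2) ≤ ℓ ^ (2 * n) + ℓ ^ (2 * n - 1) :=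
      le_trans (Nat.pow_le_pow_right hl1 (by omega)) (Nat.le_add_right _ _)
    push_cast [Nat.cast_sub hle]
    ring
end

section
/- Let ℓ be a prime, n ≥ 1, and q ∈ (Z/ℓ^n)^× with q ≡ 1 mod ℓ. Let ν be the ℓ-adic valuation of q − 1 (so 1 ≤ ν ≤ n, where ν = n means q = 1 in Z/ℓ^n). Then every matrix over Z/ℓ^n of the form [[1, w],[0, q]] with w ∈ Z/ℓ^n is GL₂(Z/ℓ^n)-conjugate to exactly one matrix M_a = [[1, ℓ^a],[0, q]] with 0 ≤ a ≤ ν. -/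
section StmtAux

variable {ℓ n : ℕ}

private lemma auxS8_pow_zero_iff (hℓ : ℓ.Prime) (a : ℕ) :
    ((ℓ : ZMod (ℓ ^ n)) ^ a = 0) ↔ n ≤ a := by
  haveI : NeZero (ℓ ^ n) := ⟨pow_ne_zero n hℓ.pos.ne'⟩
  rw [show ((ℓ : ZMod (ℓ ^ n)) ^ a) = ((ℓ ^ a : ℕ) : ZMod (ℓ ^ n)) by push_cast; ring,
    ZMod.natCast_eq_zero_iff, Nat.pow_dvd_pow_iff_le_right hℓ.one_lt]

private lemma auxS8_dvd (hℓ : ℓ.Prime) {a b : ℕ} (hb : b < n) (c : ZMod (ℓ ^ n))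
    (h : (ℓ : ZMod (ℓ ^ n)) ^ b = c * (ℓ : ZMod (ℓ ^ n)) ^ a) : a ≤ b := by
  by_contra hab
  push_neg at hab
  have h2 : (ℓ : ZMod (ℓ ^ n)) ^ b * (ℓ : ZMod (ℓ ^ n)) ^ (n - 1 - b)
      = c * ((ℓ : ZMod (ℓ ^ n)) ^ a * (ℓ : ZMod (ℓ ^ n)) ^ (n - 1 - b)) := by
    rw [h]; ring
  rw [← pow_add, ← pow_add] at h2
  have hz : (ℓ : ZMod (ℓ ^ n)) ^ (a + (n - 1 - b)) = 0 :=
    (auxS8_pow_zero_iff hℓ _).mpr (by omega)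
  have hnz : (ℓ : ZMod (ℓ ^ n)) ^ (b + (n - 1 - b)) ≠ 0 := by
    intro h0
    have := (auxS8_pow_zero_iff hℓ _).mp h0
    omega
  rw [hz, mul_zero] at h2
  exact hnz h2

private lemma auxS8_unit_iff (hℓ : ℓ.Prime) (hn : n ≠ 0) (x : ZMod (ℓ ^ n)) :
    IsUnit x ↔ ZMod.castHom (dvd_pow_self ℓ hn) (ZMod ℓ) x ≠ 0 := by
  haveI : NeZero (ℓ ^ n) := ⟨pow_ne_zero n hℓ.pos.ne'⟩
  haveI := Fact.mk hℓ
  have hx : ZMod.castHom (dvd_pow_self ℓ hn) (ZMod ℓ) x = ((x.val : ℕ) : ZMod ℓ) := by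
    rw [ZMod.castHom_apply, ZMod.natCast_val]
  constructor
  · intro hu h0
    exact (hu.map (ZMod.castHom (dvd_pow_self ℓ hn) (ZMod ℓ))).ne_zero h0
  · intro h0
    rw [hx, Ne, ZMod.natCast_eq_zero_iff] at h0
    have hc : (x.val).Coprime (ℓ ^ n) :=
      Nat.Coprime.pow_right _ ((Nat.Prime.coprime_iff_not_dvd hℓ).mpr h0).symm
    have := (ZMod.isUnit_iff_coprime x.val (ℓ ^ n)).mpr hc
    rwa [ZMod.natCast_rightInverse x] at this

private lemma auxS8_decomp (hℓ : ℓ.Prime) (w : ZMod (ℓ ^ n)) (hw : w ≠ 0) :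
    padicValNat ℓ w.val < n ∧
      ∃ u : ZMod (ℓ ^ n), IsUnit u ∧ w = u * (ℓ : ZMod (ℓ ^ n)) ^ (padicValNat ℓ w.val) := by
  haveI : NeZero (ℓ ^ n) := ⟨pow_ne_zero n hℓ.pos.ne'⟩
  haveI := Fact.mk hℓ
  have hv0 : w.val ≠ 0 := fun h => hw (by rwa [ZMod.val_eq_zero] at h)
  set v := padicValNat ℓ w.val with hv
  have hdvd : ℓ ^ v ∣ w.val := pow_padicValNat_dvd
  set m := w.val / ℓ ^ v with hm
  have hmm : ℓ ^ v * m = w.val := Nat.mul_div_cancel' hdvd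
  have hnd : ¬ ℓ ∣ m := by
    intro hd
    apply pow_succ_padicValNat_not_dvd hv0 (p := ℓ)
    rw [← hv, pow_succ]
    exact Dvd.dvd.trans (mul_dvd_mul_left _ hd) (by rw [hmm])
  have hvlt : v < n := by
    have h1 : ℓ ^ v ≤ w.val := Nat.le_of_dvd (Nat.pos_of_ne_zero hv0) hdvd
    have h2 : w.val < ℓ ^ n := ZMod.val_lt w
    exact (Nat.pow_lt_pow_iff_right hℓ.one_lt).mp (lt_of_le_of_lt h1 h2)
  refine ⟨hvlt, (m : ZMod (ℓ ^ n)), ?_, ?_⟩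
  · exact (ZMod.isUnit_iff_coprime m (ℓ ^ n)).mpr
      (Nat.Coprime.pow_right _ ((Nat.Prime.coprime_iff_not_dvd hℓ).mpr hnd).symm)
  · have : w = ((w.val : ℕ) : ZMod (ℓ ^ n)) := (ZMod.natCast_rightInverse w).symm
    rw [this, ← hmm]
    push_cast
    ring

private lemma auxS8_uniq (hℓ : ℓ.Prime) (hn : n ≠ 0) (q : ZMod (ℓ ^ n)) {ν a a' : ℕ}
    (hνn : ν ≤ n) (ha : a ≤ ν) (ha' : a' ≤ ν)
    (u' : ZMod (ℓ ^ n)) (hd : q - 1 = u' * (ℓ : ZMod (ℓ ^ n)) ^ ν)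
    (x y z t : ZMod (ℓ ^ n)) (hdet : IsUnit (x * t - y * z))
    (e1 : (ℓ : ZMod (ℓ ^ n)) ^ a' * z = 0)
    (e2 : x * (ℓ : ZMod (ℓ ^ n)) ^ a + y * q = y + (ℓ : ZMod (ℓ ^ n)) ^ a' * t)
    (e4 : z * (ℓ : ZMod (ℓ ^ n)) ^ a = 0) : a = a' := by
  set p : ZMod (ℓ ^ n) := (ℓ : ZMod (ℓ ^ n)) with hp
  by_cases hxt : IsUnit x ∧ IsUnit t
  · obtain ⟨⟨xu, hxu⟩, ⟨tu, htu⟩⟩ := hxt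
    have key1 : p ^ a' = (↑tu⁻¹ * (x + y * u' * p ^ (ν - a))) * p ^ a := by
      have h1 : p ^ a' * t = (x + y * u' * p ^ (ν - a)) * p ^ a := by
        have hh : p ^ a' * t = x * p ^ a + y * (q - 1) := by linear_combination -e2
        rw [hh, hd]
        have hh2 : p ^ ν = p ^ (ν - a) * p ^ a := by rw [← pow_add]; congr 1; omega
        rw [hh2]; ring
      calc p ^ a' = (p ^ a' * t) * ↑tu⁻¹ := by rw [← htu, mul_assoc, Units.mul_inv, mul_one]
        _ = (↑tu⁻¹ * (x + y * u' * p ^ (ν - a))) * p ^ a := by rw [h1]; ring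
    have key2 : p ^ a = (↑xu⁻¹ * (t - y * u' * p ^ (ν - a'))) * p ^ a' := by
      have h1 : p ^ a * x = (t - y * u' * p ^ (ν - a')) * p ^ a' := by
        have hh : x * p ^ a = p ^ a' * t - y * (q - 1) := by linear_combination e2
        rw [mul_comm (p ^ a) x, hh, hd]
        have hh2 : p ^ ν = p ^ (ν - a') * p ^ a' := by rw [← pow_add]; congr 1; omega
        rw [hh2]; ring
      calc p ^ a = (p ^ a * x) * ↑xu⁻¹ := by rw [← hxu, mul_assoc, Units.mul_inv, mul_one]
        _ = (↑xu⁻¹ * (t - y * u' * p ^ (ν - a'))) * p ^ a' := by rw [h1]; ring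
    have hle1 : a ≤ a' := by
      rcases Nat.lt_or_ge a' n with h | h
      · exact auxS8_dvd hℓ h _ key1
      · omega
    have hle2 : a' ≤ a := by
      rcases Nat.lt_or_ge a n with h | h
      · exact auxS8_dvd hℓ h _ key2
      · omega
    omega
  · set φ := ZMod.castHom (dvd_pow_self ℓ hn) (ZMod ℓ) with hφ
    haveI := Fact.mk hℓ
    have hz : IsUnit z := by
      rw [auxS8_unit_iff hℓ hn]
      intro h0
      have hdet' : φ (x * t - y * z) ≠ 0 := (auxS8_unit_iff hℓ hn _).mp hdet
      have h1 : φ x * φ t = 0 := by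
        rcases not_and_or.mp hxt with h | h
        · rw [not_not.mp ((auxS8_unit_iff hℓ hn x).not.mp h), zero_mul]
        · rw [not_not.mp ((auxS8_unit_iff hℓ hn t).not.mp h), mul_zero]
      apply hdet'
      rw [map_sub, map_mul, map_mul, h1, h0, mul_zero, sub_zero]
    obtain ⟨zu, hzu⟩ := hz
    have hza' : p ^ a' = 0 := by
      have h2 : ↑zu⁻¹ * (z * p ^ a') = p ^ a' := by
        rw [← mul_assoc, ← hzu, Units.inv_mul, one_mul]
      rw [← h2, mul_comm z, e1, mul_zero]
    have hza : p ^ a = 0 := by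
      have h2 : ↑zu⁻¹ * (z * p ^ a) = p ^ a := by
        rw [← mul_assoc, ← hzu, Units.inv_mul, one_mul]
      rw [← h2, e4, mul_zero]
    have h1 := (auxS8_pow_zero_iff hℓ _).mp hza'
    have h2 := (auxS8_pow_zero_iff hℓ _).mp hza
    omega

private lemma auxS8_exist (hℓ : ℓ.Prime) (hn : n ≠ 0) (q : ZMod (ℓ ^ n)) {ν : ℕ}
    (u' : ZMod (ℓ ^ n)) (hu' : IsUnit u') (hd : q - 1 = u' * (ℓ : ZMod (ℓ ^ n)) ^ ν)
    (w : ZMod (ℓ ^ n)) :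
    ∃ a : ℕ, a ≤ ν ∧ ∃ uu : (ZMod (ℓ ^ n))ˣ, ∃ y : ZMod (ℓ ^ n),
      ↑uu * (ℓ : ZMod (ℓ ^ n)) ^ a + y * (q - 1) = w := by
  obtain ⟨u'u, hu'u⟩ := hu'
  by_cases hw : w = 0
  · refine ⟨ν, le_refl _, u'u, -1, ?_⟩
    rw [hw, hu'u, hd]; ring
  · obtain ⟨hvlt, u₀, hu₀, hw0⟩ := auxS8_decomp hℓ w hw
    set v := padicValNat ℓ w.val with hv
    rcases le_or_gt v ν with hle | hlt
    · obtain ⟨u₀u, hu₀u⟩ := hu₀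
      exact ⟨v, hle, u₀u, 0, by rw [hu₀u, hw0]; ring⟩
    · have hunit : IsUnit (u' + u₀ * (ℓ : ZMod (ℓ ^ n)) ^ (v - ν)) := by
        rw [auxS8_unit_iff hℓ hn]
        set φ := ZMod.castHom (dvd_pow_self ℓ hn) (ZMod ℓ) with hφ
        have hℓ0 : φ (ℓ : ZMod (ℓ ^ n)) = 0 := by
          haveI := Fact.mk hℓ
          rw [map_natCast, ZMod.natCast_self]
        have hφeq : φ (u' + u₀ * (ℓ : ZMod (ℓ ^ n)) ^ (v - ν)) = φ u' := by
          rw [map_add, map_mul, map_pow, hℓ0, zero_pow (by omega), mul_zero, add_zero]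
        rw [hφeq]
        exact (auxS8_unit_iff hℓ hn u').mp ⟨u'u, hu'u⟩
      obtain ⟨cu, hcu⟩ := hunit
      refine ⟨ν, le_refl _, cu, -1, ?_⟩
      rw [hcu, hd, hw0]
      have hh : (ℓ : ZMod (ℓ ^ n)) ^ v
          = (ℓ : ZMod (ℓ ^ n)) ^ (v - ν) * (ℓ : ZMod (ℓ ^ n)) ^ ν := by
        rw [← pow_add]; congr 1; omega
      rw [hh]; ring

private lemma auxS8_conj (R : Type) [CommRing R] (q m w : R) (uu : Rˣ) (y : R)
    (h : ↑uu * m + y * (q - 1) = w) :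
    ∃ g : GL (Fin 2) R,
      (g : Matrix (Fin 2) (Fin 2) R) * !![1, m; 0, q] *
        ((g⁻¹ : GL (Fin 2) R) : Matrix (Fin 2) (Fin 2) R) =
      !![1, w; 0, q] := by
  have h1 : (↑uu : R) * ↑uu⁻¹ = 1 := Units.mul_inv uu
  have h2 : (↑uu⁻¹ : R) * ↑uu = 1 := Units.inv_mul uu
  obtain ⟨A, hA⟩ : ∃ A : Matrix (Fin 2) (Fin 2) R, A = !![(↑uu : R), y; 0, 1] := ⟨_, rfl⟩
  obtain ⟨B, hB⟩ : ∃ B : Matrix (Fin 2) (Fin 2) R, B = !![(↑uu⁻¹ : R), -(↑uu⁻¹ * y); 0, 1] :=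
    ⟨_, rfl⟩
  have hval : A * B = 1 := by
    rw [hA, hB, Matrix.mul_fin_two, Matrix.one_fin_two,
      show (↑uu : R) * ↑uu⁻¹ + y * 0 = 1 by linear_combination h1,
      show (↑uu : R) * -(↑uu⁻¹ * y) + y * 1 = 0 by linear_combination (-y) * h1,
      show (0 : R) * ↑uu⁻¹ + 1 * 0 = 0 by ring,
      show (0 : R) * -(↑uu⁻¹ * y) + 1 * 1 = 1 by ring]
  have hinv : B * A = 1 := by
    rw [hA, hB, Matrix.mul_fin_two, Matrix.one_fin_two,
      show (↑uu⁻¹ : R) * ↑uu + -(↑uu⁻¹ * y) * 0 = 1 by linear_combination h2,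
      show (↑uu⁻¹ : R) * y + -(↑uu⁻¹ * y) * 1 = 0 by ring,
      show (0 : R) * ↑uu + 1 * 0 = 0 by ring,
      show (0 : R) * y + 1 * 1 = 1 by ring]
  refine ⟨⟨A, B, hval, hinv⟩, ?_⟩
  show A * !![1, m; 0, q] * B = !![1, w; 0, q]
  rw [hA, hB, Matrix.mul_fin_two,
    show ((↑uu : R) * 1 + y * 0) = ↑uu by ring,
    show ((0 : R) * 1 + 1 * 0) = 0 by ring,
    show ((0 : R) * m + 1 * q) = q by ring, Matrix.mul_fin_two,
    show ((↑uu : R) * ↑uu⁻¹ + (↑uu * m + y * q) * 0) = 1 by linear_combination h1,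
    show ((↑uu : R) * -(↑uu⁻¹ * y) + (↑uu * m + y * q) * 1) = w by
      linear_combination h + (-y) * h1,
    show ((0 : R) * ↑uu⁻¹ + q * 0) = 0 by ring,
    show ((0 : R) * -(↑uu⁻¹ * y) + q * 1) = q by ring]

end StmtAux

/-- Every matrix `[[1, w],[0, q]]` over `Z/ℓ^n` is conjugate to exactly one matrix
`M_a = [[1, ℓ^a],[0, q]]` with `0 ≤ a ≤ ν`. -/
theorem stmt8 (ℓ : ℕ) (hℓ : ℓ.Prime) (n : ℕ) (hn : 1 ≤ n)
    (q : ZMod (ℓ ^ n)) (hq : IsUnit q)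
    (hq1 : ZMod.castHom (dvd_pow_self ℓ (by omega : n ≠ 0)) (ZMod ℓ) q = 1)
    (ν : ℕ) (hν1 : 1 ≤ ν) (hνn : ν ≤ n)
    (hν : (q = 1 → ν = n) ∧ (q ≠ 1 → ν = padicValNat ℓ (q - 1).val)) :
    ∀ w : ZMod (ℓ ^ n), ∃! a : ℕ, a ≤ ν ∧
      ∃ g : GL (Fin 2) (ZMod (ℓ ^ n)),
        (g : Matrix (Fin 2) (Fin 2) (ZMod (ℓ ^ n))) *
            (!![1, (ℓ : ZMod (ℓ ^ n)) ^ a; 0, q]) *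
            ((g⁻¹ : GL (Fin 2) (ZMod (ℓ ^ n))) : Matrix (Fin 2) (Fin 2) (ZMod (ℓ ^ n))) =
          !![1, w; 0, q] := by
  intro w
  have hn0 : n ≠ 0 := by omega
  haveI : NeZero (ℓ ^ n) := ⟨pow_ne_zero n hℓ.pos.ne'⟩
  obtain ⟨u', hu', hd⟩ :
      ∃ u' : ZMod (ℓ ^ n), IsUnit u' ∧ q - 1 = u' * (ℓ : ZMod (ℓ ^ n)) ^ ν := by
    by_cases hq' : q = 1
    · refine ⟨1, isUnit_one, ?_⟩
      have hz : (ℓ : ZMod (ℓ ^ n)) ^ ν = 0 :=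
        (auxS8_pow_zero_iff hℓ ν).mpr (le_of_eq (hν.1 hq').symm)
      rw [hq', sub_self, hz, mul_zero]
    · have hne : q - 1 ≠ 0 := sub_ne_zero.mpr hq'
      obtain ⟨_, u, hu, hqd⟩ := auxS8_decomp hℓ (q - 1) hne
      rw [← hν.2 hq'] at hqd
      exact ⟨u, hu, hqd⟩
  obtain ⟨a, ha, uu, y, hwa⟩ := auxS8_exist hℓ hn0 q u' hu' hd w
  obtain ⟨g, hg⟩ := auxS8_conj _ q _ w uu y hwa
  refine ⟨a, ⟨ha, g, hg⟩, ?_⟩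
  rintro b ⟨hb, gb, hgb⟩
  -- combine the two conjugations
  obtain ⟨Gb, hGb⟩ : ∃ M : Matrix (Fin 2) (Fin 2) (ZMod (ℓ ^ n)), M = ↑gb := ⟨_, rfl⟩
  obtain ⟨Gbi, hGbi⟩ : ∃ M : Matrix (Fin 2) (Fin 2) (ZMod (ℓ ^ n)), M = ↑gb⁻¹ := ⟨_, rfl⟩
  obtain ⟨Gg, hGg⟩ : ∃ M : Matrix (Fin 2) (Fin 2) (ZMod (ℓ ^ n)), M = ↑g := ⟨_, rfl⟩
  obtain ⟨Ggi, hGgi⟩ : ∃ M : Matrix (Fin 2) (Fin 2) (ZMod (ℓ ^ n)), M = ↑g⁻¹ := ⟨_, rfl⟩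
  have hbi : Gbi * Gb = 1 := by rw [hGb, hGbi]; exact Units.inv_mul gb
  have hgi : Ggi * Gg = 1 := by rw [hGg, hGgi]; exact Units.inv_mul g
  rw [← hGb, ← hGbi] at hgb
  rw [← hGg, ← hGgi] at hg
  have h1 : Gb * !![1, (ℓ : ZMod (ℓ ^ n)) ^ b; 0, q] = !![1, w; 0, q] * Gb := by
    conv_lhs => rw [← mul_one (Gb * !![1, (ℓ : ZMod (ℓ ^ n)) ^ b; 0, q]), ← hbi,
      ← mul_assoc, hgb]
  have h2 : !![1, (ℓ : ZMod (ℓ ^ n)) ^ a; 0, q] * Ggi = Ggi * !![1, w; 0, q] := by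
    have h2' := congrArg (fun M => Ggi * M) hg
    simp only [← mul_assoc, hgi, one_mul] at h2'
    rw [h2']
  set G : Matrix (Fin 2) (Fin 2) (ZMod (ℓ ^ n)) := Ggi * Gb with hG
  have key : G * !![1, (ℓ : ZMod (ℓ ^ n)) ^ b; 0, q]
      = !![1, (ℓ : ZMod (ℓ ^ n)) ^ a; 0, q] * G := by
    calc G * !![1, (ℓ : ZMod (ℓ ^ n)) ^ b; 0, q]
        = Ggi * (Gb * !![1, (ℓ : ZMod (ℓ ^ n)) ^ b; 0, q]) := by rw [hG, mul_assoc]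
      _ = Ggi * (!![1, w; 0, q] * Gb) := by rw [h1]
      _ = (Ggi * !![1, w; 0, q]) * Gb := by rw [mul_assoc]
      _ = (!![1, (ℓ : ZMod (ℓ ^ n)) ^ a; 0, q] * Ggi) * Gb := by rw [h2]
      _ = !![1, (ℓ : ZMod (ℓ ^ n)) ^ a; 0, q] * G := by rw [hG, mul_assoc]
  have hGunit : IsUnit G := by
    rw [hG, hGgi, hGb, ← Units.val_mul]
    exact Units.isUnit _
  have hdet : IsUnit (G 0 0 * G 1 1 - G 0 1 * G 1 0) := by
    have := (Matrix.isUnit_iff_isUnit_det G).mp hGunit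
    rwa [Matrix.det_fin_two] at this
  have e00 := congrFun (congrFun key 0) 0
  have e01 := congrFun (congrFun key 0) 1
  have e11 := congrFun (congrFun key 1) 1
  simp [Matrix.mul_apply, Fin.sum_univ_two] at e00 e01 e11
  refine auxS8_uniq hℓ hn0 q hνn hb ha u' hd (G 0 0) (G 0 1) (G 1 0) (G 1 1) hdet ?_ ?_ ?_
  · linear_combination e00
  · linear_combination e01
  · linear_combination e11
end
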